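/- arXiv:2008.03068 — 6 statements merged into one kernel-verified Lean document; each statement's English description precedes it below -/
import Mathlib

section
/- For integers m ≥ 0, n ≥ 0 with m - n ≥ 1 and z in the open unit disk, the integral over the unit disk (with respect to normalized area measure dA = dxdy/π) of w^m \bar{w}^n/(w - z) equals z^{m-n-1}(1 - |z|^{2n+2})/(n+1). -/
open MeasureTheory Metric Set Real Complex
open scoped Real

noncomputable section


lemma volume_im_eq_zero : (volume : Measure ℂ) {w : ℂ | w.im = 0} = 0 := by
  have h : {w : ℂ | w.im = 0} = (Submodule.span ℝ {(1:ℂ)} : Submodule ℝ ℂ) := by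
    ext w
    simp only [Set.mem_setOf_eq, SetLike.mem_coe, Submodule.mem_span_singleton]
    constructor
    · intro hw; exact ⟨w.re, by apply Complex.ext <;> simp [hw]⟩
    · rintro ⟨x, rfl⟩; simp
  rw [h]
  apply MeasureTheory.Measure.addHaar_submodule
  intro htop
  have hI : (Complex.I : ℂ) ∈ Submodule.span ℝ {(1:ℂ)} := by rw [htop]; trivial
  obtain ⟨x, hx⟩ := Submodule.mem_span_singleton.mp hI
  have := congrArg Complex.im hx
  simp at this

lemma polar_image {R : ℝ} (hR : 0 < R) :
    Complex.polarCoord.symm '' (Ioo 0 R ×ˢ Ioo (-π) π) = ball (0:ℂ) R ∩ Complex.slitPlane := by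
  ext w
  constructor
  · rintro ⟨p, ⟨hp1, hp2⟩, rfl⟩
    have hmem : p ∈ Complex.polarCoord.target := by
      rw [Complex.polarCoord_target]; exact ⟨hp1.1, hp2⟩
    refine ⟨?_, Complex.polarCoord.map_target hmem⟩
    rw [mem_ball, dist_zero_right, Complex.norm_polarCoord_symm,
      abs_of_pos hp1.1]
    exact hp1.2
  · rintro ⟨hw1, hw2⟩
    have hw0 : w ≠ 0 := by rintro rfl; exact Complex.zero_notMem_slitPlane hw2
    refine ⟨Complex.polarCoord w, ⟨⟨?_, ?_⟩, ?_, ?_⟩, Complex.polarCoord.left_inv hw2⟩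
    · rw [Complex.polarCoord_apply]; exact norm_pos_iff.mpr hw0
    · rw [Complex.polarCoord_apply]; rwa [mem_ball, dist_zero_right] at hw1
    · rw [Complex.polarCoord_apply]
      exact Complex.neg_pi_lt_arg w
    · rw [Complex.polarCoord_apply]
      exact lt_of_le_of_ne (Complex.arg_le_pi w) (Complex.slitPlane_arg_ne_pi hw2)

lemma polar_ae {R : ℝ} (hR : 0 < R) :
    (Complex.polarCoord.symm '' (Ioo 0 R ×ˢ Ioo (-π) π) : Set ℂ) =ᵐ[volume] ball (0:ℂ) R := by
  rw [polar_image hR, MeasureTheory.ae_eq_set]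
  constructor
  · refine measure_mono_null (fun w hw => absurd hw.1.1 hw.2) (measure_empty (μ := volume))
  · refine measure_mono_null ?_ volume_im_eq_zero
    intro w hw
    simp only [mem_diff, mem_inter_iff, not_and] at hw
    have := hw.2 hw.1
    simp only [Complex.mem_slitPlane_iff, not_or, not_lt, ne_eq, not_not] at this
    exact this.2


section polar

variable {E : Type*} [NormedAddCommGroup E] [NormedSpace ℝ E]

private def Bmat (p : ℝ × ℝ) : ℝ × ℝ →L[ℝ] ℝ × ℝ :=
  LinearMap.toContinuousLinearMap (Matrix.toLin (Module.Basis.finTwoProd ℝ) (Module.Basis.finTwoProd ℝ)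
    !![Real.cos p.2, -p.1 * Real.sin p.2; Real.sin p.2, p.1 * Real.cos p.2])

private lemma Bmat_det (p : ℝ × ℝ) : (Bmat p).det = p.1 := by
  conv_rhs => rw [← one_mul p.1, ← Real.cos_sq_add_sin_sq p.2]
  simp only [Bmat, neg_mul, LinearMap.det_toContinuousLinearMap, LinearMap.det_toLin,
    Matrix.det_fin_two_of, sub_neg_eq_add]
  ring

private lemma hasB (p : ℝ × ℝ) : HasFDerivAt polarCoord.symm (Bmat p) p :=
  hasFDerivAt_polarCoord_symm p

lemma integrableOn_polar_iff (f : ℂ → E) {s : Set (ℝ × ℝ)} (hs : MeasurableSet s)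
    (h's : s ⊆ polarCoord.target) :
    IntegrableOn f (Complex.polarCoord.symm '' s) ↔
      IntegrableOn (fun p : ℝ × ℝ => p.1 • f (Complex.polarCoord.symm p)) s := by
  have hinj : InjOn polarCoord.symm s := polarCoord.symm.injOn.mono h's
  have hder : ∀ p ∈ s, HasFDerivWithinAt polarCoord.symm (Bmat p) s p :=
    fun p _ => (hasB p).hasFDerivWithinAt
  have himg : Complex.polarCoord.symm '' s =
      Complex.measurableEquivRealProd.symm '' (polarCoord.symm '' s) := by
    rw [Set.image_image]; rfl
  rw [himg,
    (Complex.volume_preserving_equiv_real_prod.symm _).integrableOn_image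
      Complex.measurableEquivRealProd.symm.measurableEmbedding,
    integrableOn_image_iff_integrableOn_abs_det_fderiv_smul volume hs hder hinj]
  apply integrableOn_congr_fun _ hs
  intro p hp
  simp only [Bmat_det, abs_of_pos (show (0:ℝ) < p.1 from (h's hp).1)]
  rfl

lemma setIntegral_polar (f : ℂ → E) {s : Set (ℝ × ℝ)} (hs : MeasurableSet s)
    (h's : s ⊆ polarCoord.target) :
    ∫ w in Complex.polarCoord.symm '' s, f w =
      ∫ p in s, p.1 • f (Complex.polarCoord.symm p) := by
  have hinj : InjOn polarCoord.symm s := polarCoord.symm.injOn.mono h's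
  have hder : ∀ p ∈ s, HasFDerivWithinAt polarCoord.symm (Bmat p) s p :=
    fun p _ => (hasB p).hasFDerivWithinAt
  have himg : Complex.polarCoord.symm '' s =
      Complex.measurableEquivRealProd.symm '' (polarCoord.symm '' s) := by
    rw [Set.image_image]; rfl
  rw [himg,
    (Complex.volume_preserving_equiv_real_prod.symm _).setIntegral_image_emb
      Complex.measurableEquivRealProd.symm.measurableEmbedding,
    integral_image_eq_integral_abs_det_fderiv_smul volume hs hder hinj]
  apply setIntegral_congr_fun hs
  intro p hp
  simp only [Bmat_det, abs_of_pos (show (0:ℝ) < p.1 from (h's hp).1)]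
  rfl

end polar


lemma circle_piece (k n : ℕ) (z : ℂ) {r : ℝ} (hr : 0 < r) (hne : r ≠ ‖z‖) :
    (∫ θ in Ioo (-π) π, ((r:ℂ) * Complex.exp (θ * Complex.I)) ^ (n + k + 1) *
      (starRingEnd ℂ ((r:ℂ) * Complex.exp (θ * Complex.I))) ^ n /
      ((r:ℂ) * Complex.exp (θ * Complex.I) - z))
      = if ‖z‖ < r then 2 * π * z ^ k * (r:ℂ) ^ (2*n) else 0 := by
  set G : ℝ → ℂ := fun θ => ((r:ℂ) * Complex.exp (θ * Complex.I)) ^ (n + k + 1) *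
      (starRingEnd ℂ ((r:ℂ) * Complex.exp (θ * Complex.I))) ^ n /
      ((r:ℂ) * Complex.exp (θ * Complex.I) - z) with hG
  have hper : Function.Periodic G (2 * π) := by
    intro θ
    have he : Complex.exp ((↑(θ + 2*π) : ℂ) * Complex.I) = Complex.exp (θ * Complex.I) := by
      push_cast
      exact Complex.exp_mul_I_periodic θ
    simp only [hG, he]
  have h1 : (∫ θ in Ioo (-π) π, G θ) = ∫ θ in (0:ℝ)..(2*π), G θ := by
    rw [← integral_Ioc_eq_integral_Ioo,
      ← intervalIntegral.integral_of_le (by linarith [Real.pi_pos] : -π ≤ π)]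
    have h := hper.intervalIntegral_add_eq (-π) 0
    rw [show -π + 2*π = π by ring, zero_add] at h
    exact h
  -- pointwise identity with the circle integrand
  have hw_ne : ∀ θ : ℝ, (r:ℂ) * Complex.exp (θ * Complex.I) - z ≠ 0 := by
    intro θ h0
    apply hne
    have : (r:ℂ) * Complex.exp (θ * Complex.I) = z := by linear_combination h0
    have h2 := congrArg (‖·‖) this
    simp only [norm_mul, Complex.norm_exp_ofReal_mul_I, Complex.norm_real, Real.norm_eq_abs, abs_of_pos hr, mul_one] at h2
    simpa using h2
  have hkey : ∀ θ : ℝ, G θ = (-Complex.I * (r:ℂ) ^ (2*n)) *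
      (deriv (circleMap 0 r) θ • ((circleMap 0 r θ - z)⁻¹ • (circleMap 0 r θ) ^ k)) := by
    intro θ
    have hcm : circleMap 0 r θ = (r:ℂ) * Complex.exp (θ * Complex.I) := by
      simp [circleMap]
    rw [deriv_circleMap, hcm]
    simp only [hG]
    set u := Complex.exp ((θ:ℂ) * Complex.I) with hu
    have hu0 : u ≠ 0 := Complex.exp_ne_zero _
    have hconj : (starRingEnd ℂ) ((r:ℂ) * u) = (r:ℂ) * u⁻¹ := by
      rw [map_mul, Complex.conj_ofReal, hu, ← Complex.exp_conj, ← Complex.exp_neg]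
      congr 1
      simp
    rw [hconj]
    have hne' := hw_ne θ
    rw [← hu] at hne'
    field_simp
    ring_nf
    rw [Complex.I_sq]
    rw [inv_pow]; field_simp; ring
  have h2 : (∫ θ in (0:ℝ)..(2*π), G θ) =
      (-Complex.I * (r:ℂ) ^ (2*n)) * ∮ w in C(0, r), (w - z)⁻¹ • w ^ k := by
    rw [circleIntegral, ← intervalIntegral.integral_const_mul]
    exact intervalIntegral.integral_congr fun θ _ => hkey θ
  rw [h1, h2]
  rcases lt_or_gt_of_ne hne with hlt | hgt
  · -- r < |z| : no pole inside, integral zero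
    rw [if_neg (by linarith)]
    have hz0 : ∀ w ∈ closedBall (0:ℂ) r, w ≠ z := by
      intro w hw
      intro hwz
      rw [mem_closedBall, dist_zero_right, hwz] at hw
      linarith
    have : (∮ w in C(0, r), (w - z)⁻¹ • w ^ k) = 0 := by
      apply Complex.circleIntegral_eq_zero_of_differentiable_on_off_countable hr.le
        Set.countable_empty
      · refine ContinuousOn.smul (f := fun w => (w - z)⁻¹) (g := fun w : ℂ => w ^ k) ?_ ?_
        · exact ContinuousOn.inv₀ (by fun_prop) fun w hw => sub_ne_zero.mpr (hz0 w hw)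
        · fun_prop
      · intro w hw
        have hwz : w ≠ z := hz0 w (ball_subset_closedBall hw.1)
        refine DifferentiableAt.smul (c := fun w => (w - z)⁻¹) (f := fun w : ℂ => w ^ k) ?_ ?_
        · exact (differentiableAt_id.sub_const z).inv (sub_ne_zero.mpr hwz)
        · exact differentiableAt_pow k
    rw [this, mul_zero]
  · -- |z| < r : Cauchy formula
    rw [if_pos hgt]
    have hmem : z ∈ ball (0:ℂ) r := by
      rw [mem_ball, dist_zero_right]; exact hgt
    have hd : DiffContOnCl ℂ (fun w : ℂ => w ^ k) (ball (0:ℂ) r) :=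
      (differentiable_pow k).diffContOnCl
    rw [hd.circleIntegral_sub_inv_smul hmem]
    simp only [smul_eq_mul]
    ring_nf
    rw [Complex.I_sq]
    ring
lemma integrableOn_inv_norm (R : ℝ) (hR : 0 < R) :
    IntegrableOn (fun w : ℂ => ‖w‖⁻¹) (ball (0:ℂ) R) := by
  have hsub : (Ioo (0:ℝ) R ×ˢ Ioo (-π) π) ⊆ polarCoord.target := by
    rw [polarCoord_target]; rintro p ⟨h1, h2⟩; exact ⟨h1.1, h2⟩
  have hms : MeasurableSet (Ioo (0:ℝ) R ×ˢ Ioo (-π) π) :=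
    measurableSet_Ioo.prod measurableSet_Ioo
  have himg : IntegrableOn (fun w : ℂ => ‖w‖⁻¹)
      (Complex.polarCoord.symm '' (Ioo (0:ℝ) R ×ˢ Ioo (-π) π)) := by
    rw [integrableOn_polar_iff _ hms hsub]
    rw [integrableOn_congr_fun (g := fun _ => (1:ℝ)) ?_ hms]
    · refine integrableOn_const (ne_of_lt ?_)
      rw [Measure.volume_eq_prod, Measure.prod_prod]
      exact ENNReal.mul_lt_top (by simp [Real.volume_Ioo]) (by simp [Real.volume_Ioo])
    · rintro ⟨r, θ⟩ ⟨h1, h2⟩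
      simp only [Complex.norm_polarCoord_symm, smul_eq_mul]
      rw [abs_of_pos h1.1, mul_inv_cancel₀ (ne_of_gt h1.1)]
  rwa [IntegrableOn, ← Measure.restrict_congr_set (polar_ae hR)]

lemma integrableOn_cauchy_kernel (z : ℂ) :
    IntegrableOn (fun w : ℂ => ‖w - z‖⁻¹) (ball (0:ℂ) 1) := by
  set R : ℝ := 1 + ‖z‖ with hRdef
  have hR : 0 < R := by positivity
  have h1 : IntegrableOn (fun w : ℂ => ‖w‖⁻¹) (ball (0:ℂ) R) := integrableOn_inv_norm R hR
  have h2 := (measurePreserving_add_right (volume : Measure ℂ) z).integrableOn_comp_preimage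
    (MeasurableEquiv.addRight z).measurableEmbedding
    (f := fun w : ℂ => ‖w - z‖⁻¹) (s := ball z R)
  have hpre : ((· + z) : ℂ → ℂ) ⁻¹' ball z R = ball (0:ℂ) R := by
    ext w; simp [mem_ball, dist_eq_norm]
  have hcomp : ((fun w : ℂ => ‖w - z‖⁻¹) ∘ (· + z)) = fun w : ℂ => ‖w‖⁻¹ := by
    funext w; simp
  rw [hpre, hcomp] at h2
  have h3 : IntegrableOn (fun w : ℂ => ‖w - z‖⁻¹) (ball z R) := h2.mp h1
  apply h3.mono_set
  intro w hw
  rw [mem_ball] at hw ⊢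
  calc dist w z ≤ dist w 0 + dist 0 z := dist_triangle _ _ _
    _ < 1 + ‖z‖ := by
        rw [dist_zero_right] at hw
        have : dist (0:ℂ) z = ‖z‖ := by simp [dist_eq_norm]
        rw [this, dist_zero_right]; linarith

lemma integrableOn_f (m n : ℕ) (z : ℂ) :
    IntegrableOn (fun w : ℂ => w ^ m * (starRingEnd ℂ w) ^ n / (w - z)) (ball (0:ℂ) 1) := by
  apply Integrable.mono' (integrableOn_cauchy_kernel z)
  · exact (((measurable_id.pow_const m).mul
      ((continuous_star (R := ℂ)).measurable.pow_const n)).div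
      (measurable_id.sub_const z)).aestronglyMeasurable
  · refine (ae_restrict_mem measurableSet_ball).mono fun w hw => ?_
    rw [mem_ball, dist_zero_right] at hw
    rw [norm_div, norm_mul, norm_pow, norm_pow, RCLike.norm_conj]
    rcases eq_or_lt_of_le (norm_nonneg (w - z)) with h0 | h0
    · rw [← h0]; simp
    · rw [inv_eq_one_div, div_le_div_iff_of_pos_right h0]
      calc ‖w‖ ^ m * ‖w‖ ^ n ≤ 1 * 1 := by
            apply mul_le_mul
            · exact pow_le_one₀ (norm_nonneg _) hw.le
            · exact pow_le_one₀ (norm_nonneg _) hw.le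
            · positivity
            · norm_num
        _ = 1 := by norm_num

theorem stmt_0 (m n : ℕ) (h : 1 ≤ (m : ℤ) - n) (z : ℂ) (hz : z ∈ ball (0 : ℂ) 1) :
    (Real.pi : ℂ)⁻¹ * ∫ w in ball (0 : ℂ) 1, w ^ m * (starRingEnd ℂ w) ^ n / (w - z)
      = z ^ (m - n - 1) * (1 - (‖z‖ : ℂ) ^ (2 * n + 2)) / (n + 1) := by
  obtain ⟨k, rfl⟩ : ∃ k, m = n + k + 1 := ⟨m - n - 1, by omega⟩
  have hz1 : ‖z‖ < 1 := by
    rwa [mem_ball, dist_zero_right] at hz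
  have hz0 : 0 ≤ ‖z‖ := norm_nonneg z
  set a := ‖z‖ with ha
  set f : ℂ → ℂ := fun w => w ^ (n + k + 1) * (starRingEnd ℂ w) ^ n / (w - z) with hf
  have hsub : (Ioo (0:ℝ) 1 ×ˢ Ioo (-π) π) ⊆ polarCoord.target := by
    rw [polarCoord_target]; rintro p ⟨h1, h2⟩; exact ⟨h1.1, h2⟩
  have hms : MeasurableSet (Ioo (0:ℝ) 1 ×ˢ Ioo (-π) π) :=
    measurableSet_Ioo.prod measurableSet_Ioo
  have hint : IntegrableOn f (ball (0:ℂ) 1) := integrableOn_f (n + k + 1) n z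
  have hpolar : (∫ w in ball (0:ℂ) 1, f w)
      = ∫ p in (Ioo (0:ℝ) 1 ×ˢ Ioo (-π) π), p.1 • f (Complex.polarCoord.symm p) := by
    rw [← setIntegral_congr_set (polar_ae one_pos), setIntegral_polar f hms hsub]
  have hint2 : IntegrableOn (fun p : ℝ × ℝ => p.1 • f (Complex.polarCoord.symm p))
      (Ioo (0:ℝ) 1 ×ˢ Ioo (-π) π) := by
    rw [← integrableOn_polar_iff f hms hsub]
    exact hint.mono_set (by rw [polar_image one_pos]; exact inter_subset_left)
  rw [Measure.volume_eq_prod] at hint2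
  have hfub : (∫ p in (Ioo (0:ℝ) 1 ×ˢ Ioo (-π) π), p.1 • f (Complex.polarCoord.symm p))
      = ∫ r in Ioo (0:ℝ) 1, ∫ θ in Ioo (-π) π, r • f (Complex.polarCoord.symm (r, θ)) := by
    rw [Measure.volume_eq_prod]
    exact setIntegral_prod _ hint2
  have hQ : ∀ p : ℝ × ℝ,
      Complex.polarCoord.symm p = (p.1 : ℂ) * Complex.exp (p.2 * Complex.I) := by
    intro p
    rw [Complex.polarCoord_symm_apply, Complex.exp_mul_I, Complex.ofReal_cos,
      Complex.ofReal_sin]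
  have hinner : ∀ r ∈ Ioo (0:ℝ) 1, r ≠ a →
      (∫ θ in Ioo (-π) π, r • f (Complex.polarCoord.symm (r, θ)))
        = Set.indicator (Ioi a) (fun r : ℝ => (2 * π * z ^ k : ℂ) * (r:ℂ) ^ (2*n+1)) r := by
    intro r hr hra
    rw [integral_smul]
    have hcp : (∫ θ in Ioo (-π) π, f (Complex.polarCoord.symm (r, θ)))
        = if a < r then 2 * π * z ^ k * (r:ℂ) ^ (2*n) else 0 := by
      simp only [hf, hQ]
      exact circle_piece k n z hr.1 hra
    rw [hcp]
    rcases lt_or_gt_of_ne hra with hlt | hgt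
    · rw [if_neg (by linarith), smul_zero,
        Set.indicator_of_notMem (by simpa using hlt.le)]
    · rw [if_pos hgt, Set.indicator_of_mem (by exact hgt)]
      rw [Complex.real_smul]
      ring
  have houter : (∫ r in Ioo (0:ℝ) 1, ∫ θ in Ioo (-π) π, r • f (Complex.polarCoord.symm (r, θ)))
      = ∫ r in Ioo (0:ℝ) 1,
          Set.indicator (Ioi a) (fun r : ℝ => (2 * π * z ^ k : ℂ) * (r:ℂ) ^ (2*n+1)) r := by
    apply setIntegral_congr_ae measurableSet_Ioo
    have hae : ∀ᵐ r : ℝ, r ∉ ({a} : Set ℝ) :=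
      measure_eq_zero_iff_ae_notMem.mp Real.volume_singleton
    filter_upwards [hae] with r hra hr
    exact hinner r hr (by simpa using hra)
  have hind : (∫ r in Ioo (0:ℝ) 1,
        Set.indicator (Ioi a) (fun r : ℝ => (2 * π * z ^ k : ℂ) * (r:ℂ) ^ (2*n+1)) r)
      = ∫ r in Ioo a 1, (2 * π * z ^ k : ℂ) * (r:ℂ) ^ (2*n+1) := by
    rw [setIntegral_indicator measurableSet_Ioi]
    congr 1
    rw [Set.Ioo_inter_Ioi, max_eq_right hz0]
  have hval : (∫ r in Ioo a 1, (2 * π * z ^ k : ℂ) * (r:ℂ) ^ (2*n+1))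
      = (2 * π * z ^ k : ℂ) * (((1 - a ^ (2*n+2)) / (2*n+2) : ℝ) : ℂ) := by
    rw [integral_const_mul]
    congr 1
    have hcast : ∀ r : ℝ, ((r:ℂ)) ^ (2*n+1) = ((r ^ (2*n+1) : ℝ) : ℂ) := by
      intro r; push_cast; ring
    simp_rw [hcast]
    have hre : (∫ r in Ioo a 1, ((r ^ (2*n+1) : ℝ) : ℂ))
        = (((∫ r in Ioo a 1, (r ^ (2*n+1) : ℝ)) : ℝ) : ℂ) := integral_ofReal (𝕜 := ℂ)
    rw [hre]
    congr 1
    rw [← integral_Ioc_eq_integral_Ioo, ← intervalIntegral.integral_of_le hz1.le,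
      integral_pow]
    push_cast
    ring
  have hk : n + k + 1 - n - 1 = k := by omega
  rw [hk, hpolar, hfub, houter, hind, hval]
  have hpi : (π : ℂ) ≠ 0 := Complex.ofReal_ne_zero.mpr Real.pi_ne_zero
  have hn1 : ((n : ℂ) + 1) ≠ 0 := Nat.cast_add_one_ne_zero n
  have h2n : ((2:ℂ) * (n:ℂ) + 2) ≠ 0 := by
    have e : ((2:ℂ) * n + 2) = 2 * ((n:ℂ)+1) := by ring
    rw [e]; exact mul_ne_zero two_ne_zero hn1
  push_cast
  field_simp [h2n]

end
end

section
/- For 1 ≤ q < 2, the function Φ(t) = (2/(2−q))·₂F₁(q/2, q/2 − 1; 1; t) + t^{q/2}·₂F₁(q/2, q/2; 2; t) is monotone increasing on [0, 1]. -/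
/-- The Gauss hypergeometric series ₂F₁(a,b;c;t). -/
noncomputable def hyp2F1 (a b c t : ℝ) : ℝ :=
  ∑' n : ℕ, ((ascPochhammer ℝ n).eval a * (ascPochhammer ℝ n).eval b)
      / ((ascPochhammer ℝ n).eval c * n.factorial) * t ^ n

namespace Stmt7Aux

noncomputable def Pa (a : ℝ) (n : ℕ) : ℝ := (ascPochhammer ℝ n).eval a

noncomputable def uu (a : ℝ) (n : ℕ) : ℝ := (Pa a n / n.factorial) ^ 2

noncomputable def dd (a : ℝ) (n : ℕ) : ℝ := uu a n / (n + 1)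

noncomputable def ee (a : ℝ) (n : ℕ) : ℝ := ((a + n) / (n + 1)) * dd a n

noncomputable def cc (a : ℝ) (n : ℕ) : ℝ :=
  Pa a n * Pa (a - 1) n / ((n.factorial : ℝ) * n.factorial)

lemma Pa_zero (a : ℝ) : Pa a 0 = 1 := by simp [Pa]

lemma Pa_succ (a : ℝ) (n : ℕ) : Pa a (n + 1) = Pa a n * (a + n) := by
  simp [Pa, ascPochhammer_succ_eval]

lemma uu_nonneg (a : ℝ) (n : ℕ) : 0 ≤ uu a n := sq_nonneg _

lemma uu_zero (a : ℝ) : uu a 0 = 1 := by simp [uu, Pa_zero]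

lemma uu_succ (a : ℝ) (n : ℕ) : uu a (n + 1) = uu a n * ((a + n) / (n + 1)) ^ 2 := by
  have hn : ((n.factorial : ℝ)) ≠ 0 := by positivity
  have hn1 : ((n : ℝ) + 1) ≠ 0 := by positivity
  simp only [uu, Pa_succ, Nat.factorial_succ]
  push_cast
  field_simp

lemma dd_nonneg (a : ℝ) (n : ℕ) : 0 ≤ dd a n := by
  have : (0:ℝ) < (n:ℝ) + 1 := by positivity
  exact div_nonneg (uu_nonneg a n) this.le

lemma key {a : ℝ} (ha0 : 0 < a) (ha1 : a < 1) (n : ℕ) :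
    (1 - a) * dd a n ≤ uu a n - uu a (n + 1) := by
  have hm : (0:ℝ) < (n:ℝ) + 1 := by positivity
  have hx : 0 ≤ uu a n := uu_nonneg a n
  have hc0 : (0:ℝ) ≤ a + n := by positivity
  have hcm : a + (n:ℝ) ≤ (n:ℝ) + 1 := by linarith
  rw [uu_succ, dd, div_pow]
  have h1 : (1 - a) * (uu a n / ((n:ℝ) + 1)) = uu a n * ((1 - a) * ((n:ℝ)+1)) / ((n:ℝ)+1)^2 := by
    field_simp
  have h2 : uu a n - uu a n * ((a + n)^2 / ((n:ℝ)+1)^2)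
      = uu a n * (((n:ℝ)+1)^2 - (a+n)^2) / ((n:ℝ)+1)^2 := by
    field_simp
  rw [h1, h2]
  apply div_le_div_of_nonneg_right _ (by positivity)
  · apply mul_le_mul_of_nonneg_left _ hx
    nlinarith

lemma summable_dd {a : ℝ} (ha0 : 0 < a) (ha1 : a < 1) : Summable (dd a) := by
  apply summable_of_sum_range_le (c := 1 / (1 - a)) (fun n => dd_nonneg a n)
  intro n
  have h1a : (0:ℝ) < 1 - a := by linarith
  rw [le_div_iff₀ h1a]
  have h : ∑ i ∈ Finset.range n, ((1 - a) * dd a i)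
      ≤ ∑ i ∈ Finset.range n, (uu a i - uu a (i+1)) :=
    Finset.sum_le_sum (fun i _ => key ha0 ha1 i)
  rw [Finset.sum_range_sub' (uu a) n, uu_zero] at h
  calc (∑ i ∈ Finset.range n, dd a i) * (1 - a)
      = ∑ i ∈ Finset.range n, ((1 - a) * dd a i) := by
        rw [Finset.sum_mul]; exact Finset.sum_congr rfl (fun i _ => by ring)
    _ ≤ 1 - uu a n := h
    _ ≤ 1 := by linarith [uu_nonneg a n]

lemma ee_nonneg {a : ℝ} (ha0 : 0 < a) (n : ℕ) : 0 ≤ ee a n := by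
  have h1 : (0:ℝ) ≤ (a + n) / (n + 1) := by positivity
  exact mul_nonneg h1 (dd_nonneg a n)

lemma ee_le_dd {a : ℝ} (ha0 : 0 < a) (ha1 : a < 1) (n : ℕ) : ee a n ≤ dd a n := by
  have hm : (0:ℝ) < (n:ℝ) + 1 := by positivity
  have h1 : (a + (n:ℝ)) / ((n:ℝ) + 1) ≤ 1 := by
    rw [div_le_one hm]; linarith
  calc ee a n = ((a + n) / (n + 1)) * dd a n := rfl
    _ ≤ 1 * dd a n := mul_le_mul_of_nonneg_right h1 (dd_nonneg a n)
    _ = dd a n := one_mul _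

lemma eval_two (n : ℕ) : (ascPochhammer ℝ n).eval 2 = ((n+1).factorial : ℝ) := by
  have h := factorial_mul_ascPochhammer ℝ 1 n
  norm_num at h
  rw [Nat.add_comm 1 n] at h
  exact h

lemma Pa_sub_one_succ (a : ℝ) (n : ℕ) : Pa (a - 1) (n + 1) = (a - 1) * Pa a n := by
  simp only [Pa, ascPochhammer_succ_left, Polynomial.eval_mul, Polynomial.eval_X,
    Polynomial.eval_comp, Polynomial.eval_add, Polynomial.eval_one, sub_add_cancel]

lemma cc_zero (a : ℝ) : cc a 0 = 1 := by simp [cc, Pa_zero]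

lemma cc_succ (a : ℝ) (n : ℕ) : cc a (n + 1) = (a - 1) * ee a n := by
  have hn : ((n.factorial : ℝ)) ≠ 0 := by positivity
  have hn1 : ((n : ℝ) + 1) ≠ 0 := by positivity
  unfold cc ee dd uu
  rw [Pa_sub_one_succ, Pa_succ, Nat.factorial_succ]
  push_cast
  field_simp

lemma dd_term_eq (a : ℝ) (n : ℕ) :
    Pa a n * Pa a n / ((ascPochhammer ℝ n).eval 2 * n.factorial) = dd a n := by
  have hn : ((n.factorial : ℝ)) ≠ 0 := by positivity
  have hn1 : ((n : ℝ) + 1) ≠ 0 := by positivity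
  rw [eval_two, dd, uu, Nat.factorial_succ]
  push_cast
  field_simp

lemma hyp2_eq (a t : ℝ) : hyp2F1 a a 2 t = ∑' n : ℕ, dd a n * t ^ n := by
  unfold hyp2F1
  exact tsum_congr fun n => by rw [← dd_term_eq a n]; rfl

lemma hyp1_eq (a t : ℝ) : hyp2F1 a (a - 1) 1 t = ∑' n : ℕ, cc a n * t ^ n := by
  unfold hyp2F1
  refine tsum_congr fun n => ?_
  rw [cc]
  simp [Pa, ascPochhammer_eval_one]

section SummableAt

variable {a t : ℝ} (ha0 : 0 < a) (ha1 : a < 1) (ht0 : 0 ≤ t) (ht1 : t ≤ 1)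

include ha0 ha1 ht0 ht1

lemma summable_ddt : Summable (fun n : ℕ => dd a n * (t ^ a * t ^ n)) := by
  apply Summable.of_nonneg_of_le
    (fun n => mul_nonneg (dd_nonneg a n)
      (mul_nonneg (Real.rpow_nonneg ht0 a) (pow_nonneg ht0 n)))
    (fun n => ?_) (summable_dd ha0 ha1)
  have h1 : t ^ a ≤ 1 := Real.rpow_le_one ht0 ht1 ha0.le
  have h2 : t ^ n ≤ 1 := pow_le_one₀ ht0 ht1
  have h3 : (0:ℝ) ≤ t ^ a := Real.rpow_nonneg ht0 a
  have h4 : (0:ℝ) ≤ t ^ n := pow_nonneg ht0 n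
  calc dd a n * (t ^ a * t ^ n) ≤ dd a n * (1 * 1) := by
        apply mul_le_mul_of_nonneg_left _ (dd_nonneg a n)
        exact mul_le_mul h1 h2 h4 zero_le_one
    _ = dd a n := by ring

lemma summable_eet : Summable (fun n : ℕ => ee a n * t ^ (n + 1)) := by
  apply Summable.of_nonneg_of_le
    (fun n => mul_nonneg (ee_nonneg ha0 n) (pow_nonneg ht0 _))
    (fun n => ?_) (summable_dd ha0 ha1)
  calc ee a n * t ^ (n+1) ≤ ee a n * 1 :=
        mul_le_mul_of_nonneg_left (pow_le_one₀ ht0 ht1) (ee_nonneg ha0 n)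
    _ = ee a n := mul_one _
    _ ≤ dd a n := ee_le_dd ha0 ha1 n

lemma summable_cct : Summable (fun n : ℕ => cc a n * t ^ n) := by
  apply (summable_nat_add_iff 1).mp
  have : (fun n : ℕ => cc a (n + 1) * t ^ (n + 1))
      = fun n : ℕ => (a - 1) * (ee a n * t ^ (n + 1)) := by
    funext n; rw [cc_succ]; ring
  rw [this]
  exact (summable_eet ha0 ha1 ht0 ht1).mul_left _

lemma Phi_eq :
    1 / (1 - a) * hyp2F1 a (a - 1) 1 t + t ^ a * hyp2F1 a a 2 t
      = 1 / (1 - a) + ∑' n : ℕ, (dd a n * (t ^ a * t ^ n) - ee a n * t ^ (n + 1)) := by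
  have h1a : (1:ℝ) - a ≠ 0 := by intro h; apply absurd ha1; linarith [(sub_eq_zero.mp h)]
  have hsum_c := summable_cct ha0 ha1 ht0 ht1
  have hsum_d := summable_ddt ha0 ha1 ht0 ht1
  have hsum_e := summable_eet ha0 ha1 ht0 ht1
  rw [hyp1_eq, hyp2_eq]
  rw [Summable.tsum_eq_zero_add hsum_c]
  have hc0 : cc a 0 * t ^ 0 = 1 := by rw [cc_zero]; ring
  rw [hc0]
  have hshift : ∑' n : ℕ, cc a (n + 1) * t ^ (n + 1)
      = (a - 1) * ∑' n : ℕ, ee a n * t ^ (n + 1) := by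
    rw [← tsum_mul_left]
    exact tsum_congr fun n => by rw [cc_succ]; ring
  rw [hshift]
  have hd : t ^ a * ∑' n : ℕ, dd a n * t ^ n = ∑' n : ℕ, dd a n * (t ^ a * t ^ n) := by
    rw [← tsum_mul_left]
    exact tsum_congr fun n => by ring
  rw [hd]
  rw [Summable.tsum_sub hsum_d hsum_e]
  have hinv : 1 / (1 - a) * (a - 1) = -1 := by field_simp; ring
  linear_combination (∑' n : ℕ, ee a n * t ^ (n + 1)) * hinv

end SummableAt

lemma mono_h {a : ℝ} (ha0 : 0 < a) (ha1 : a < 1) (n : ℕ) :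
    MonotoneOn (fun t : ℝ => t ^ a * t ^ n - ((a + n) / (n + 1)) * t ^ (n + 1))
      (Set.Icc (0:ℝ) 1) := by
  apply monotoneOn_of_deriv_nonneg (convex_Icc 0 1)
  · apply ContinuousOn.sub
    · exact ContinuousOn.mul
        (fun x _ => (Real.continuousAt_rpow_const x a (Or.inr ha0.le)).continuousWithinAt)
        (continuous_pow n).continuousOn
    · exact (continuous_const.mul (continuous_pow (n+1))).continuousOn
  · rw [interior_Icc]
    intro x hx
    have hx0 : x ≠ 0 := ne_of_gt hx.1
    exact (((Real.hasDerivAt_rpow_const (Or.inl hx0)).mul (hasDerivAt_pow n x)).sub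
      ((hasDerivAt_pow (n+1) x).const_mul _)).differentiableAt.differentiableWithinAt
  · rw [interior_Icc]
    intro x hx
    have hx0 : (0:ℝ) < x := hx.1
    have hx0' : x ≠ 0 := ne_of_gt hx0
    have H := ((Real.hasDerivAt_rpow_const (p := a) (Or.inl hx0')).mul (hasDerivAt_pow n x)).sub
      ((hasDerivAt_pow (n+1) x).const_mul ((a + n) / (n + 1)))
    rw [show deriv (fun t : ℝ => t ^ a * t ^ n - (a + ↑n) / (↑n + 1) * t ^ (n + 1)) x = _ from H.deriv]
    have hge : (1:ℝ) ≤ x ^ (a - 1) :=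
      Real.one_le_rpow_of_pos_of_le_one_of_nonpos hx0 hx.2.le (by linarith)
    have hxa : x ^ a = x ^ (a - 1) * x := by
      rw [← Real.rpow_add_one hx0' (a - 1)]; norm_num
    have hn1 : ((n:ℝ) + 1) ≠ 0 := by positivity
    rcases n with _ | m
    · norm_num
      nlinarith [hge, ha0.le]
    · have hsimp : Nat.succ m + 1 - 1 = Nat.succ m := rfl
      have hpow : x ^ (m + 1) = x * x ^ m := by ring
      have hm1 : ((m:ℝ) + 1 + 1) ≠ 0 := by positivity
      have hE : a * x ^ (a - 1) * x ^ (m + 1) + x ^ a * (↑(m + 1) * x ^ (m + 1 - 1))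
          - (a + ↑(m + 1)) / (↑(m + 1) + 1) * (↑(m + 1 + 1) * x ^ (m + 1 + 1 - 1))
          = (a + (m:ℝ) + 1) * x ^ (m + 1) * (x ^ (a - 1) - 1) := by
        simp only [Nat.add_sub_cancel]
        rw [hxa]
        push_cast
        field_simp
        ring
      push_cast at hE ⊢
      rw [hE]
      have : (0:ℝ) ≤ x ^ (m+1) := pow_nonneg hx0.le _
      have h1 : (0:ℝ) ≤ a + (m:ℝ) + 1 := by positivity
      exact mul_nonneg (mul_nonneg h1 this) (by linarith)

lemma mono_g {a : ℝ} (ha0 : 0 < a) (ha1 : a < 1) (n : ℕ) {s t : ℝ}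
    (hs : s ∈ Set.Icc (0:ℝ) 1) (ht : t ∈ Set.Icc (0:ℝ) 1) (hst : s ≤ t) :
    dd a n * (s ^ a * s ^ n) - ee a n * s ^ (n + 1)
      ≤ dd a n * (t ^ a * t ^ n) - ee a n * t ^ (n + 1) := by
  have h := mono_h ha0 ha1 n hs ht hst
  have hrw : ∀ x : ℝ, dd a n * (x ^ a * x ^ n) - ee a n * x ^ (n + 1)
      = dd a n * (x ^ a * x ^ n - ((a + n) / (n + 1)) * x ^ (n + 1)) := by
    intro x; rw [ee]; ring
  rw [hrw s, hrw t]
  exact mul_le_mul_of_nonneg_left h (dd_nonneg a n)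

theorem main {a : ℝ} (ha0 : 0 < a) (ha1 : a < 1) :
    MonotoneOn
      (fun t : ℝ => 1 / (1 - a) * hyp2F1 a (a - 1) 1 t + t ^ a * hyp2F1 a a 2 t)
      (Set.Icc (0 : ℝ) 1) := by
  intro s hs t ht hst
  simp only
  rw [Phi_eq ha0 ha1 hs.1 hs.2, Phi_eq ha0 ha1 ht.1 ht.2]
  apply add_le_add_right
  exact Summable.tsum_le_tsum (fun n => mono_g ha0 ha1 n hs ht hst)
    ((summable_ddt ha0 ha1 hs.1 hs.2).sub (summable_eet ha0 ha1 hs.1 hs.2))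
    ((summable_ddt ha0 ha1 ht.1 ht.2).sub (summable_eet ha0 ha1 ht.1 ht.2))

end Stmt7Aux

theorem stmt_7 (q : ℝ) (hq1 : 1 ≤ q) (hq2 : q < 2) :
    MonotoneOn
      (fun t : ℝ =>
        2 / (2 - q) * hyp2F1 (q / 2) (q / 2 - 1) 1 t
          + t ^ (q / 2) * hyp2F1 (q / 2) (q / 2) 2 t)
      (Set.Icc (0 : ℝ) 1) := by
  have ha0 : 0 < q / 2 := by linarith
  have ha1 : q / 2 < 1 := by linarith
  have h := Stmt7Aux.main ha0 ha1
  have hco : 1 / (1 - q / 2) = 2 / (2 - q) := by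
    rw [show (1:ℝ) - q / 2 = (2 - q) / 2 by ring, one_div_div]
  simpa [hco] using h
end

section
/- For 1 ≤ q < 2, sup_{t ∈ [0,1]} [(2/(2−q))·₂F₁(q/2, q/2 − 1; 1; t) + t^{q/2}·₂F₁(q/2, q/2; 2; t)] = 2Γ(2−q)/Γ(2−q/2)², attained at t = 1. -/
open scoped Nat
open MeasureTheory Real Filter Set

noncomputable def po (x : ℝ) (n : ℕ) : ℝ := (ascPochhammer ℝ n).eval x

lemma po_zero (x : ℝ) : po x 0 = 1 := by simp [po]

lemma po_succ (x : ℝ) (n : ℕ) : po x (n+1) = po x n * (x + n) :=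
  ascPochhammer_succ_eval n x

lemma po_pos {x : ℝ} (hx : 0 < x) (n : ℕ) : 0 < po x n := by
  induction n with
  | zero => simp [po_zero]
  | succ n ih =>
      rw [po_succ]
      have : (0:ℝ) < x + n := by positivity
      exact mul_pos ih this

lemma po_shift (x : ℝ) (n : ℕ) : po (x - 1) (n+1) = (x - 1) * po x n := by
  rw [po, po, ascPochhammer_succ_left, Polynomial.eval_mul, Polynomial.eval_X,
    Polynomial.eval_comp, Polynomial.eval_add, Polynomial.eval_X, Polynomial.eval_one,
    sub_add_cancel]

lemma po_one_eval (n : ℕ) : po 1 n = (n ! : ℝ) := ascPochhammer_eval_one ℝ n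

lemma po_two_eval (n : ℕ) : po 2 n = ((n+1)! : ℝ) := by
  induction n with
  | zero => simp [po_zero]
  | succ n ih =>
      rw [po_succ, ih]
      push_cast [Nat.factorial_succ]
      ring

lemma Gamma_po {x : ℝ} (hx : 0 < x) (n : ℕ) :
    Real.Gamma (x + n) = po x n * Real.Gamma x := by
  induction n with
  | zero => simp [po_zero]
  | succ n ih =>
      have hxn : x + (n:ℝ) ≠ 0 := by positivity
      have : x + ((n:ℕ)+1:ℕ) = (x + n) + 1 := by push_cast; ring
      rw [this, Real.Gamma_add_one hxn, ih, po_succ]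
      ring

lemma po_div_fact_le {a : ℝ} (ha0 : 0 < a) (ha1 : a ≤ 1) (n : ℕ) :
    po a n / n ! ≤ ((n : ℝ) + 1) ^ (a - 1) := by
  induction n with
  | zero => simp [po_zero]
  | succ n ih =>
      set X : ℝ := (n : ℝ) + 1 with hXdef
      have hX : (0:ℝ) < X := by positivity
      have h1 : (0:ℝ) < ((X+1)/X) ^ (1-a) := rpow_pos_of_pos (by positivity) _
      have h2 : ((X+1)/X) ^ (1-a) ≤ 1 + (1-a)/X := by
        have hb : (-1:ℝ) ≤ 1/X := by
          have h : (0:ℝ) ≤ 1/X := by positivity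
          linarith
        have := rpow_one_add_le_one_add_mul_self (s := 1/X) (p := 1-a) hb (by linarith) (by linarith)
        calc ((X+1)/X) ^ (1-a) = (1 + 1/X) ^ (1-a) := by
              congr 1; field_simp
          _ ≤ 1 + (1-a) * (1/X) := this
          _ = 1 + (1-a)/X := by ring
      have h3 : (a + n)/X ≤ ((X+1)/X) ^ (a-1) := by
        rw [show a-1 = -(1-a) by ring, rpow_neg (by positivity), inv_eq_one_div,
          le_div_iff₀ h1]
        have hnn : (0:ℝ) ≤ (a+n)/X := by positivity
        have hmul := mul_le_mul_of_nonneg_left h2 hnn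
        have hid : (a+n)/X * (1 + (1-a)/X) ≤ 1 := by
          have heq : (a+n)/X * (1 + (1-a)/X) = (a+n)*(X+(1-a))/X^2 := by
            rw [show (1:ℝ) + (1-a)/X = (X+(1-a))/X by rw [add_div, div_self hX.ne'],
              div_mul_div_comm, ← sq]
          rw [heq, div_le_one (by positivity)]
          have han : a + (n:ℝ) = X - (1-a) := by rw [hXdef]; ring
          nlinarith [sq_nonneg (1-a)]
        linarith
      have hstep : po a (n+1) / ((n+1)! : ℝ) = (po a n / n !) * ((a+n)/X) := by
        have hfac : (((n+1)! : ℕ):ℝ) = ((n:ℝ)+1) * (n ! : ℝ) := by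
          push_cast [Nat.factorial_succ]; ring
        rw [po_succ, div_mul_div_comm, hfac, hXdef]
        ring
      calc po a (n+1) / ((n+1)! : ℝ) = (po a n / n !) * ((a+n)/X) := hstep
        _ ≤ X ^ (a-1) * ((a+n)/X) := by
            apply mul_le_mul_of_nonneg_right ih (by positivity)
        _ ≤ (X+1) ^ (a-1) := by
            have hd : (X+1) ^ (a-1) = X ^ (a-1) * ((X+1)/X) ^ (a-1) := by
              rw [div_rpow (by positivity) hX.le, ← mul_div_assoc,
                mul_comm, mul_div_assoc, div_self (by positivity : X ^ (a-1) ≠ 0), mul_one]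
            rw [hd]
            exact mul_le_mul_of_nonneg_left h3 (by positivity)
        _ = (((n:ℝ)+1) + 1) ^ (a-1) := by rw [hXdef]
        _ = ((((n+1):ℕ):ℝ) + 1) ^ (a-1) := by push_cast; ring_nf

lemma summable_rpow_shift {p : ℝ} (hp : p < -1) :
    Summable (fun n : ℕ => ((n:ℝ)+1) ^ p) := by
  have h := (summable_nat_add_iff 1).mpr (Real.summable_nat_rpow.mpr hp)
  refine h.congr fun n => ?_
  push_cast
  ring_nf

lemma summable_po_series (r : ℝ) {x : ℝ} (hx : |x| < 1) :
    Summable (fun n : ℕ => po r n * x ^ n / n !) := by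
  have hx0 : (0:ℝ) ≤ |x| := abs_nonneg x
  set l : ℝ := (1 + |x|)/2 with hl
  have hl1 : l < 1 := by rw [hl]; linarith
  have hxl : |x| < l := by rw [hl]; linarith
  have hl0 : (0:ℝ) < l := by rw [hl]; linarith
  obtain ⟨N, hN⟩ := exists_nat_ge ((|r| * |x|) / (l - |x|))
  apply summable_of_ratio_norm_eventually_le hl1
  filter_upwards [eventually_ge_atTop N] with n hn
  have hfact : (((n+1)! : ℕ) : ℝ) = ((n:ℝ)+1) * (n ! : ℝ) := by
    push_cast [Nat.factorial_succ]; ring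
  have hnorm : ‖po r (n+1) * x ^ (n+1) / ((n+1)! : ℕ)‖
      = (|r + n| * |x| / ((n:ℝ)+1)) * ‖po r n * x ^ n / (n ! : ℕ)‖ := by
    rw [po_succ, pow_succ]
    simp only [norm_div, norm_mul, Real.norm_eq_abs, hfact, abs_mul]
    rw [abs_of_pos (show (0:ℝ) < (n:ℝ)+1 by positivity),
       abs_of_pos (show (0:ℝ) < ((n !:ℕ):ℝ) by positivity)]
    field_simp
  rw [hnorm]
  apply mul_le_mul_of_nonneg_right _ (norm_nonneg _)
  rw [div_le_iff₀ (by positivity : (0:ℝ) < (n:ℝ)+1)]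
  have h1 : |r + n| ≤ |r| + n := by
    calc |r + n| ≤ |r| + |(n:ℝ)| := abs_add_le _ _
      _ = |r| + n := by rw [abs_of_nonneg (by positivity : (0:ℝ) ≤ (n:ℝ))]
  have hNn : ((|r| * |x|) / (l - |x|)) ≤ (n:ℝ) := le_trans hN (by exact_mod_cast hn)
  have h2 : |r| * |x| ≤ (n:ℝ) * (l - |x|) := by
    rw [div_le_iff₀ (by linarith : (0:ℝ) < l - |x|)] at hNn; linarith
  calc |r + n| * |x| ≤ (|r| + n) * |x| := mul_le_mul_of_nonneg_right h1 hx0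
    _ = |r| * |x| + n * |x| := by ring
    _ ≤ n * (l - |x|) + n * |x| := by linarith
    _ = n * l := by ring
    _ ≤ l * ((n:ℝ)+1) := by nlinarith

lemma summable_po_deriv_bound (r : ℝ) {ρ : ℝ} (hρ0 : 0 < ρ) (hρ1 : ρ < 1) :
    Summable (fun n : ℕ => |po r n| * (n:ℝ) * ρ ^ n / (ρ * n !)) := by
  set l : ℝ := (1 + ρ)/2 with hl
  have hl1 : l < 1 := by rw [hl]; linarith
  have hxl : ρ < l := by rw [hl]; linarith
  have hl0 : (0:ℝ) < l := by rw [hl]; linarith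
  obtain ⟨N, hN⟩ := exists_nat_ge ((|r| * ρ) / (l - ρ))
  apply summable_of_ratio_norm_eventually_le hl1
  filter_upwards [eventually_ge_atTop (max N 1)] with n hn
  have hn1 : 1 ≤ n := le_trans (le_max_right _ _) hn
  have hnN : N ≤ n := le_trans (le_max_left _ _) hn
  have hn0 : (0:ℝ) < (n:ℝ) := by exact_mod_cast hn1
  have hfact : (((n+1)! : ℕ) : ℝ) = ((n:ℝ)+1) * (n ! : ℝ) := by
    push_cast [Nat.factorial_succ]; ring
  have hnorm : ‖|po r (n+1)| * ((n:ℝ)+1) * ρ ^ (n+1) / (ρ * ((n+1)! : ℕ))‖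
      = (|r + n| * ρ / (n:ℝ)) * ‖|po r n| * (n:ℝ) * ρ ^ n / (ρ * (n ! : ℕ))‖ := by
    rw [po_succ, pow_succ]
    simp only [norm_div, norm_mul, Real.norm_eq_abs, hfact, abs_mul, abs_abs]
    rw [abs_of_pos (show (0:ℝ) < (n:ℝ)+1 by positivity),
       abs_of_pos (show (0:ℝ) < ((n !:ℕ):ℝ) by positivity),
       abs_of_pos hρ0, abs_of_pos hn0, abs_of_pos (show (0:ℝ) < ρ^n by positivity)]
    field_simp
  rw [show ((n+1:ℕ):ℝ) = (n:ℝ)+1 by push_cast; ring, hnorm]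
  apply mul_le_mul_of_nonneg_right _ (norm_nonneg _)
  rw [div_le_iff₀ hn0]
  have h1 : |r + n| ≤ |r| + n := by
    calc |r + n| ≤ |r| + |(n:ℝ)| := abs_add_le _ _
      _ = |r| + n := by rw [abs_of_nonneg hn0.le]
  have hNn : ((|r| * ρ) / (l - ρ)) ≤ (n:ℝ) := le_trans hN (by exact_mod_cast hnN)
  have h2 : |r| * ρ ≤ (n:ℝ) * (l - ρ) := by
    rw [div_le_iff₀ (by linarith : (0:ℝ) < l - ρ)] at hNn; linarith
  calc |r + n| * ρ ≤ (|r| + n) * ρ := mul_le_mul_of_nonneg_right h1 hρ0.le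
    _ = |r| * ρ + n * ρ := by ring
    _ ≤ n * (l - ρ) + n * ρ := by linarith
    _ = l * n := by ring

lemma binomialSum (r : ℝ) {x : ℝ} (hx0 : 0 ≤ x) (hx1 : x < 1) :
    ∑' n : ℕ, po r n * x ^ n / n ! = (1 - x) ^ (-r) := by
  set ρ : ℝ := (1 + x)/2 with hρdef
  have hρ0 : 0 < ρ := by rw [hρdef]; linarith
  have hxρ : x < ρ := by rw [hρdef]; linarith
  have hρ1 : ρ < 1 := by rw [hρdef]; linarith
  set s : Set ℝ := Ioo (-ρ) ρ with hsdef
  have hmem : ∀ y : ℝ, y ∈ s → |y| < 1 := by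
    intro y hy
    have hy' : y ∈ Ioo (-ρ) ρ := hy
    rw [abs_lt]
    exact ⟨by linarith [hy'.1], by linarith [hy'.2]⟩
  have hmemρ : ∀ y : ℝ, y ∈ s → |y| ≤ ρ := by
    intro y hy
    have hy' : y ∈ Ioo (-ρ) ρ := hy
    rw [abs_le]
    exact ⟨(hy'.1).le, (hy'.2).le⟩
  set g : ℕ → ℝ → ℝ := fun n y => po r n * y ^ n / n ! with hgdef
  set g' : ℕ → ℝ → ℝ := fun n y => po r n * ((n:ℝ) * y ^ (n-1)) / n ! with hg'def
  set u : ℕ → ℝ := fun n => |po r n| * (n:ℝ) * ρ ^ n / (ρ * n !) with hudef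
  have hu : Summable u := summable_po_deriv_bound r hρ0 hρ1
  have hgderiv : ∀ n : ℕ, ∀ y : ℝ, y ∈ s → HasDerivAt (g n) (g' n y) y := fun n y _ =>
    ((hasDerivAt_pow n y).const_mul (po r n)).div_const _
  have hgbound : ∀ n : ℕ, ∀ y : ℝ, y ∈ s → ‖g' n y‖ ≤ u n := by
    intro n y hy
    rcases Nat.eq_zero_or_pos n with hn | hn
    · subst hn
      simp [hg'def, hudef]
    · have h1 : |y| ^ (n-1) ≤ ρ ^ (n-1) :=
        pow_le_pow_left₀ (abs_nonneg y) (hmemρ y hy) _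
      have h2 : ρ ^ (n-1) = ρ ^ n / ρ := by
        rw [eq_div_iff hρ0.ne', ← pow_succ, Nat.sub_add_cancel hn]
      simp only [hg'def, hudef, norm_div, norm_mul, Real.norm_eq_abs]
      rw [abs_of_nonneg (show (0:ℝ) ≤ ((n !:ℕ):ℝ) by positivity),
        abs_of_nonneg (show (0:ℝ) ≤ (n:ℝ) by positivity), abs_pow]
      rw [div_le_div_iff₀ (by positivity) (by positivity)]
      rw [h2] at h1
      calc |po r n| * ((n:ℝ) * |y| ^ (n-1)) * (ρ * n !)
          ≤ |po r n| * ((n:ℝ) * (ρ ^ n / ρ)) * (ρ * n !) := by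
            apply mul_le_mul_of_nonneg_right _ (by positivity)
            apply mul_le_mul_of_nonneg_left _ (abs_nonneg _)
            exact mul_le_mul_of_nonneg_left h1 (by positivity)
        _ = |po r n| * (n:ℝ) * ρ ^ n * ((n !:ℕ):ℝ) := by
            field_simp
  have hy₀ : (0:ℝ) ∈ s := ⟨by linarith, hρ0⟩
  have hg0 : Summable (fun n => g n 0) := summable_po_series r (by rw [abs_zero]; linarith)
  have hS : ∀ y : ℝ, y ∈ s → HasDerivAt (fun z => ∑' n, g n z) (∑' n, g' n y) y := fun y hy =>
    hasDerivAt_tsum_of_isPreconnected hu isOpen_Ioo (convex_Ioo _ _).isPreconnected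
      hgderiv hgbound hy₀ hg0 hy
  have hTsummable : ∀ y : ℝ, y ∈ s → Summable (fun n => g' n y) := fun y hy =>
    Summable.of_norm_bounded hu (fun n => hgbound n y hy)
  have hSsummable : ∀ y : ℝ, y ∈ s → Summable (fun n => g n y) := fun y hy =>
    summable_po_series r (hmem y hy)
  have hg'succ : ∀ (y : ℝ) (m : ℕ), g' (m+1) y = po r (m+1) * y ^ m / m ! := by
    intro y m
    simp only [hg'def, Nat.add_sub_cancel]
    have hfac : (((m+1)! : ℕ) : ℝ) = ((m:ℝ)+1) * (m ! : ℝ) := by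
      push_cast [Nat.factorial_succ]; ring
    have hm0 : ((m:ℝ)+1) ≠ 0 := by positivity
    have hf0 : ((m ! : ℕ):ℝ) ≠ 0 := by positivity
    rw [hfac]
    push_cast
    field_simp
  have hTshift : ∀ y : ℝ, y ∈ s →
      (∑' n, g' n y) = ∑' m, po r (m+1) * y ^ m / m ! := by
    intro y hy
    rw [Summable.tsum_eq_zero_add (hTsummable y hy)]
    have h0 : g' 0 y = 0 := by simp [hg'def]
    rw [h0, zero_add]
    exact tsum_congr (fun m => hg'succ y m)
  have hTshift_summable : ∀ y : ℝ, y ∈ s → Summable (fun m => po r (m+1) * y ^ m / m !) := by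
    intro y hy
    have := (summable_nat_add_iff 1).mpr (hTsummable y hy)
    exact this.congr (fun m => hg'succ y m)
  have hTS : ∀ y : ℝ, y ∈ s → (1 - y) * (∑' n, g' n y) = r * (∑' n, g n y) := by
    intro y hy
    have hsum1 := hTshift_summable y hy
    have hsum2 := hSsummable y hy
    have hyT : y * (∑' n, g' n y) = ∑' (m : ℕ), po r (m+1) * y ^ (m+1) / m ! := by
      rw [hTshift y hy, ← tsum_mul_left]
      exact tsum_congr (fun m => by rw [pow_succ]; ring)
    have hsub : (∑' n, g' n y) - r * (∑' n, g n y)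
        = ∑' (m : ℕ), ((m:ℝ) * po r m) * y ^ m / m ! := by
      rw [hTshift y hy, ← tsum_mul_left,
        ← Summable.tsum_sub hsum1 (hsum2.mul_left r)]
      apply tsum_congr
      intro m
      simp only [hgdef]
      rw [po_succ]
      ring
    have hsummm : Summable (fun m : ℕ => ((m:ℝ) * po r m) * y ^ m / m !) := by
      apply ((hTsummable y hy).mul_left y).congr
      intro m
      rcases Nat.eq_zero_or_pos m with hm | hm
      · subst hm; simp [hg'def]
      · have hyp : y ^ (m-1) * y = y ^ m := by
          conv_rhs => rw [← Nat.sub_add_cancel hm]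
          rw [pow_succ]
        simp only [hg'def]
        have hf0 : ((m ! : ℕ):ℝ) ≠ 0 := by positivity
        field_simp
        linear_combination (po r m) * hyp
    have hlast : (∑' (m : ℕ), ((m:ℝ) * po r m) * y ^ m / m !)
        = ∑' (m : ℕ), po r (m+1) * y ^ (m+1) / m ! := by
      rw [Summable.tsum_eq_zero_add hsummm]
      simp only [Nat.cast_zero, zero_mul, zero_div, zero_add]
      apply tsum_congr
      intro m
      have hfac : (((m+1)! : ℕ) : ℝ) = ((m:ℝ)+1) * (m ! : ℝ) := by
        push_cast [Nat.factorial_succ]; ring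
      have hm0 : ((m:ℝ)+1) ≠ 0 := by positivity
      have hf0 : ((m ! : ℕ):ℝ) ≠ 0 := by positivity
      rw [hfac]
      push_cast
      field_simp
    have h := hsub
    rw [hlast, ← hyT] at h
    linear_combination h
  have hHderiv : ∀ y : ℝ, y ∈ s →
      HasDerivAt (fun z => (∑' n, g n z) * (1 - z) ^ r) 0 y := by
    intro y hy
    have hy' : y ∈ Ioo (-ρ) ρ := hy
    have h1y : 0 < 1 - y := by linarith [hy'.2]
    have hr1 : HasDerivAt (fun z : ℝ => 1 - z) (-1) y := (hasDerivAt_id y).const_sub 1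
    have hrp : HasDerivAt (fun z : ℝ => (1 - z) ^ r) (-1 * r * (1 - y) ^ (r - 1)) y :=
      hr1.rpow_const (Or.inl h1y.ne')
    have hmul := (hS y hy).mul hrp
    have hval : (∑' n, g' n y) * (1 - y) ^ r + (∑' n, g n y) * (-1 * r * (1 - y) ^ (r - 1)) = 0 := by
      rw [Real.rpow_sub_one h1y.ne' r]
      have h := hTS y hy
      field_simp
      linear_combination ((1 - y) ^ r) * h
    rw [← hval]
    exact hmul
  have hxmem : ∀ y : ℝ, y ∈ Icc (0:ℝ) x → y ∈ s := by
    intro y hy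
    exact ⟨by linarith [hy.1], by linarith [hy.2]⟩
  have hconst : (∑' n, g n x) * (1 - x) ^ r = (∑' n, g n 0) * (1 - 0) ^ r := by
    have hc : ContinuousOn (fun z => (∑' n, g n z) * (1 - z) ^ r) (Icc 0 x) := by
      intro y hy
      exact ((hHderiv y (hxmem y hy)).continuousAt).continuousWithinAt
    have hd : ∀ y ∈ Ico (0:ℝ) x, HasDerivWithinAt (fun z => (∑' n, g n z) * (1 - z) ^ r) 0 (Ici y) y := by
      intro y hy
      exact (hHderiv y (hxmem y ⟨hy.1, hy.2.le⟩)).hasDerivWithinAt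
    exact constant_of_has_deriv_right_zero hc hd x ⟨hx0, le_refl x⟩
  have hS0 : (∑' n, g n 0) = 1 := by
    rw [tsum_eq_single 0]
    · simp [hgdef, po_zero]
    · intro n hn
      simp [hgdef, zero_pow hn]
  have hfinal : (∑' n, g n x) * (1 - x) ^ r = 1 := by
    rw [hconst, hS0]
    simp
  have hne : (1 - x) ^ r ≠ 0 := (rpow_pos_of_pos (by linarith) r).ne'
  have hgoal : (∑' n, g n x) = (1 - x) ^ (-r) := by
    rw [Real.rpow_neg (by linarith : (0:ℝ) ≤ 1 - x), inv_eq_one_div, eq_div_iff hne]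
    exact hfinal
  exact hgoal

lemma realBetaIntegrable {s t : ℝ} (hs : 0 < s) (ht : 0 < t) :
    IntegrableOn (fun x : ℝ => x ^ (s-1) * (1-x) ^ (t-1)) (Ioo 0 1) := by
  have h := Complex.betaIntegral_convergent (u := (s:ℂ)) (v := (t:ℂ))
    (by simpa using hs) (by simpa using ht)
  have h2 : IntegrableOn (fun x:ℝ => (x:ℂ) ^ ((s:ℂ)-1) * (1-(x:ℂ)) ^ ((t:ℂ)-1)) (Ioc 0 1) :=
    (intervalIntegrable_iff_integrableOn_Ioc_of_le (by norm_num)).mp h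
  have h3 := h2.mono_set Ioo_subset_Ioc_self
  have h4 := h3.re
  apply IntegrableOn.congr_fun h4 ?_ measurableSet_Ioo
  intro x hx
  have h1x : (0:ℝ) ≤ x := hx.1.le
  have h2x : (0:ℝ) ≤ 1 - x := by linarith [hx.2]
  have e1 : ((x:ℂ) ^ ((s:ℂ)-1) * (1-(x:ℂ)) ^ ((t:ℂ)-1))
      = ((x ^ (s-1) * (1-x) ^ (t-1) : ℝ) : ℂ) := by
    rw [Complex.ofReal_mul, Complex.ofReal_cpow h1x, Complex.ofReal_cpow h2x]
    push_cast
    ring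
  simp only [e1]
  simp [RCLike.re_to_complex]

lemma realBeta {s t : ℝ} (hs : 0 < s) (ht : 0 < t) :
    ∫ x in Ioo (0:ℝ) 1, x ^ (s-1) * (1-x) ^ (t-1)
      = Real.Gamma s * Real.Gamma t / Real.Gamma (s+t) := by
  have hc := Complex.Gamma_mul_Gamma_eq_betaIntegral
      (s := (s:ℂ)) (t := (t:ℂ)) (by simpa using hs) (by simpa using ht)
  have hbeta : Complex.betaIntegral s t
      = ((∫ x in (0:ℝ)..1, x ^ (s-1) * (1-x) ^ (t-1) : ℝ) : ℂ) := by
    rw [Complex.betaIntegral, ← intervalIntegral.integral_ofReal]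
    apply intervalIntegral.integral_congr
    intro x hx
    rw [uIcc_of_le (by norm_num : (0:ℝ) ≤ 1)] at hx
    have h1x : (0:ℝ) ≤ x := hx.1
    have h2x : (0:ℝ) ≤ 1 - x := by linarith [hx.2]
    show (x:ℂ) ^ ((s:ℂ)-1) * (1-(x:ℂ)) ^ ((t:ℂ)-1) = ((x ^ (s-1) * (1-x) ^ (t-1) : ℝ) : ℂ)
    rw [Complex.ofReal_mul, Complex.ofReal_cpow h1x, Complex.ofReal_cpow h2x]
    push_cast
    ring
  rw [hbeta, ← Complex.ofReal_add, Complex.Gamma_ofReal, Complex.Gamma_ofReal,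
    Complex.Gamma_ofReal, ← Complex.ofReal_mul, ← Complex.ofReal_mul] at hc
  have hreal := Complex.ofReal_injective hc
  have hiv : ∫ x in (0:ℝ)..1, x ^ (s-1) * (1-x) ^ (t-1)
      = ∫ x in Ioo (0:ℝ) 1, x ^ (s-1) * (1-x) ^ (t-1) := by
    rw [intervalIntegral.integral_of_le (by norm_num : (0:ℝ) ≤ 1),
      integral_Ioc_eq_integral_Ioo]
  rw [hiv] at hreal
  have hne : Real.Gamma (s+t) ≠ 0 := (Real.Gamma_pos_of_pos (by linarith)).ne'
  field_simp
  linarith [hreal]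

lemma summable_master {a : ℝ} (ha0 : 0 < a) (ha1 : a < 1) :
    Summable (fun n : ℕ => (po a n / n !) * (po a n / (n+1)!)) := by
  apply Summable.of_nonneg_of_le _ _ (summable_rpow_shift (p := 2*a-3) (by linarith))
  · intro n
    have h := po_pos ha0 n
    positivity
  · intro n
    have hp := po_pos ha0 n
    have h1 : po a n / n ! ≤ ((n:ℝ)+1) ^ (a-1) := po_div_fact_le ha0 ha1.le n
    have hfac : (((n+1)! : ℕ):ℝ) = ((n:ℝ)+1) * (n ! : ℝ) := by
      push_cast [Nat.factorial_succ]; ring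
    have h2 : po a n / ((n+1)! : ℝ) ≤ ((n:ℝ)+1) ^ (a-2) := by
      have e1 : po a n / (((n+1)! : ℕ):ℝ) = (po a n / n !) / ((n:ℝ)+1) := by
        rw [hfac, div_div]
        rw [mul_comm]
      rw [e1]
      have e2 : ((n:ℝ)+1) ^ (a-2) = ((n:ℝ)+1) ^ (a-1) / ((n:ℝ)+1) := by
        rw [show a-2 = (a-1)-1 by ring, Real.rpow_sub_one (by positivity)]
      rw [e2]
      gcongr
    calc (po a n / n !) * (po a n / (n+1)!)
        ≤ ((n:ℝ)+1) ^ (a-1) * (((n:ℝ)+1) ^ (a-2)) := by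
          apply mul_le_mul h1 h2 (by positivity) (by positivity)
      _ = ((n:ℝ)+1) ^ (2*a-3) := by
          rw [← Real.rpow_add (by positivity)]
          ring_nf

lemma gauss2 {a : ℝ} (ha0 : 0 < a) (ha1 : a < 1) :
    ∑' m : ℕ, (po a m / m !) * (po a m / (m+1)!)
      = Real.Gamma (2-2*a) / Real.Gamma (2-a) ^ 2 := by
  have hg : 0 < Real.Gamma a := Real.Gamma_pos_of_pos ha0
  have hg2 : 0 < Real.Gamma (2-a) := Real.Gamma_pos_of_pos (by linarith)
  set F : ℕ → ℝ → ℝ := fun m x => (po a m / m !) * (x ^ (a+(m:ℝ)-1) * (1-x) ^ (2-a-1))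
    with hFdef
  have hval : ∀ m : ℕ, ∫ x in Ioo (0:ℝ) 1, F m x
      = (Real.Gamma a * Real.Gamma (2-a)) * ((po a m / m !) * (po a m / (m+1)!)) := by
    intro m
    have hb := realBeta (s := a + (m:ℝ)) (t := 2-a) (by positivity) (by linarith)
    have hgam : Real.Gamma (a + (m:ℝ)) = po a m * Real.Gamma a := Gamma_po ha0 m
    have hplus : a + (m:ℝ) + (2-a) = ((m+1:ℕ):ℝ) + 1 := by push_cast; ring
    rw [hplus, Real.Gamma_nat_eq_factorial (m+1), hgam] at hb
    have e1 : ∫ x in Ioo (0:ℝ) 1, F m x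
        = (po a m / m !) * ∫ x in Ioo (0:ℝ) 1, x ^ (a+(m:ℝ)-1) * (1-x) ^ (2-a-1) :=
      MeasureTheory.integral_const_mul _ _
    rw [e1, hb]
    have hf0 : ((m ! : ℕ):ℝ) ≠ 0 := by positivity
    have hf1 : (((m+1)! : ℕ):ℝ) ≠ 0 := by positivity
    field_simp
  have hFint : ∀ m : ℕ, Integrable (F m) (volume.restrict (Ioo (0:ℝ) 1)) := by
    intro m
    exact (realBetaIntegrable (s := a + (m:ℝ)) (t := 2-a)
      (by positivity) (by linarith)).const_mul _
  have hFnonneg : ∀ m : ℕ, ∀ x ∈ Ioo (0:ℝ) 1, 0 ≤ F m x := by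
    intro m x hx
    have := po_pos ha0 m
    have h1 : (0:ℝ) ≤ x ^ (a+(m:ℝ)-1) := Real.rpow_nonneg hx.1.le _
    have h2 : (0:ℝ) ≤ (1-x) ^ (2-a-1) := Real.rpow_nonneg (by linarith [hx.2]) _
    positivity
  have hnorm : ∀ m : ℕ, ∫ x in Ioo (0:ℝ) 1, ‖F m x‖ = ∫ x in Ioo (0:ℝ) 1, F m x := by
    intro m
    apply setIntegral_congr_fun measurableSet_Ioo
    intro x hx
    exact Real.norm_of_nonneg (hFnonneg m x hx)
  have hsumnorm : Summable (fun m => ∫ x in Ioo (0:ℝ) 1, ‖F m x‖) := by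
    apply ((summable_master ha0 ha1).mul_left (Real.Gamma a * Real.Gamma (2-a))).congr
    intro m
    rw [hnorm m, hval m]
  have hswap := MeasureTheory.integral_tsum_of_summable_integral_norm hFint hsumnorm
  have hptwise : EqOn (fun x => ∑' m, F m x)
      (fun x => x ^ (a-1) * (1-x) ^ (2-2*a-1)) (Ioo (0:ℝ) 1) := by
    intro x hx
    have hx0 : (0:ℝ) < x := hx.1
    have hx1 : x < 1 := hx.2
    have hterm : ∀ m : ℕ, F m x = (po a m * x ^ m / m !) * (x ^ (a-1) * (1-x) ^ (2-a-1)) := by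
      intro m
      have hxp : x ^ (a+(m:ℝ)-1) = x ^ (a-1) * x ^ m := by
        rw [← Real.rpow_natCast x m, ← Real.rpow_add hx0]
        ring_nf
      rw [hFdef]
      simp only []
      rw [hxp]
      ring
    show (∑' m, F m x) = x ^ (a-1) * (1-x) ^ (2-2*a-1)
    calc (∑' m, F m x)
        = ∑' m, (po a m * x ^ m / m !) * (x ^ (a-1) * (1-x) ^ (2-a-1)) := tsum_congr hterm
      _ = (∑' m, po a m * x ^ m / m !) * (x ^ (a-1) * (1-x) ^ (2-a-1)) := tsum_mul_right
      _ = (1-x) ^ (-a) * (x ^ (a-1) * (1-x) ^ (2-a-1)) := by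
          rw [binomialSum a hx0.le hx1]
      _ = x ^ (a-1) * (1-x) ^ (2-2*a-1) := by
          rw [show 2-2*a-1 = -a + (2-a-1) by ring,
            Real.rpow_add (by linarith : (0:ℝ) < 1-x)]
          ring
  have hI : ∫ x in Ioo (0:ℝ) 1, (∑' m, F m x)
      = Real.Gamma a * Real.Gamma (2-2*a) / Real.Gamma (2-a) := by
    rw [setIntegral_congr_fun measurableSet_Ioo hptwise]
    have hb := realBeta (s := a) (t := 2-2*a) ha0 (by linarith)
    rw [show a + (2-2*a) = 2-a by ring] at hb
    rw [show (2-2*a-1 : ℝ) = (2-2*a)-1 by ring]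
    exact hb
  have hkey : (Real.Gamma a * Real.Gamma (2-a)) * (∑' m, (po a m / m !) * (po a m / (m+1)!))
      = Real.Gamma a * Real.Gamma (2-2*a) / Real.Gamma (2-a) := by
    calc (Real.Gamma a * Real.Gamma (2-a)) * (∑' m, (po a m / m !) * (po a m / (m+1)!))
        = ∑' m, (Real.Gamma a * Real.Gamma (2-a)) * ((po a m / m !) * (po a m / (m+1)!)) :=
          (tsum_mul_left).symm
      _ = ∑' m, ∫ x in Ioo (0:ℝ) 1, F m x := tsum_congr (fun m => (hval m).symm)
      _ = ∫ x in Ioo (0:ℝ) 1, (∑' m, F m x) := hswap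
      _ = Real.Gamma a * Real.Gamma (2-2*a) / Real.Gamma (2-a) := hI
  have h2a := hg2.ne'
  have ha := hg.ne'
  rw [eq_div_iff (by positivity : Real.Gamma (2-a) ^ 2 ≠ 0)]
  rw [eq_div_iff h2a] at hkey
  nlinarith [hkey]

lemma summable_gauss1_abs {a : ℝ} (ha0 : 0 < a) (ha1 : a < 1) :
    Summable (fun m : ℕ => po a m * |po (a-1) m| / ((m ! : ℝ) * m !)) := by
  rw [← summable_nat_add_iff 1]
  apply Summable.of_nonneg_of_le _ _ (summable_rpow_shift (p := a-2) (by linarith))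
  · intro m
    have h1 := po_pos ha0 (m+1)
    positivity
  · intro m
    have hp1 := po_pos ha0 (m+1)
    have hp0 := po_pos ha0 m
    have habs : |po (a-1) (m+1)| = (1-a) * po a m := by
      rw [po_shift, abs_mul, abs_of_neg (by linarith : a-1 < 0), abs_of_pos hp0]
      ring
    have e1 : po a (m+1) * |po (a-1) (m+1)| / (((m+1)! : ℝ) * (m+1)!)
        = (1-a) * ((po a (m+1) / (m+1)!) * (po a m / (m+1)!)) := by
      rw [habs]
      have hf1 : (((m+1)! : ℕ):ℝ) ≠ 0 := by positivity
      field_simp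
    rw [e1]
    have hb1 : po a (m+1) / ((m+1)! : ℝ) ≤ 1 := by
      have := po_div_fact_le ha0 ha1.le (m+1)
      have h2 : (((m+1):ℕ):ℝ) + 1 ≥ 1 := by push_cast; linarith [Nat.cast_nonneg (α := ℝ) m]
      have h3 : ((((m+1):ℕ):ℝ) + 1) ^ (a-1) ≤ 1 :=
        Real.rpow_le_one_of_one_le_of_nonpos h2 (by linarith)
      exact le_trans this h3
    have hb2 : po a m / ((m+1)! : ℝ) ≤ ((m:ℝ)+1) ^ (a-2) := by
      have hfac : (((m+1)! : ℕ):ℝ) = ((m:ℝ)+1) * (m ! : ℝ) := by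
        push_cast [Nat.factorial_succ]; ring
      have e2 : po a m / (((m+1)! : ℕ):ℝ) = (po a m / m !) / ((m:ℝ)+1) := by
        rw [hfac, div_div, mul_comm]
      rw [e2, show a-2 = (a-1)-1 by ring, Real.rpow_sub_one (by positivity)]
      gcongr
      exact po_div_fact_le ha0 ha1.le m
    calc (1-a) * ((po a (m+1) / (m+1)!) * (po a m / (m+1)!))
        ≤ 1 * ((po a (m+1) / (m+1)!) * (po a m / (m+1)!)) := by
          apply mul_le_mul_of_nonneg_right (by linarith)
          positivity
      _ = (po a (m+1) / (m+1)!) * (po a m / (m+1)!) := one_mul _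
      _ ≤ 1 * (((m:ℝ)+1) ^ (a-2)) := by
          apply mul_le_mul hb1 hb2 (by positivity) (by norm_num)
      _ = ((m:ℝ)+1) ^ (a-2) := one_mul _

lemma gauss1 {a : ℝ} (ha0 : 0 < a) (ha1 : a < 1) :
    ∑' m : ℕ, po a m * po (a-1) m / ((m ! : ℝ) * m !)
      = Real.Gamma (2-2*a) / (Real.Gamma (1-a) * Real.Gamma (2-a)) := by
  have hg : 0 < Real.Gamma a := Real.Gamma_pos_of_pos ha0
  have hg1 : 0 < Real.Gamma (1-a) := Real.Gamma_pos_of_pos (by linarith)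
  have hg2 : 0 < Real.Gamma (2-a) := Real.Gamma_pos_of_pos (by linarith)
  set F : ℕ → ℝ → ℝ := fun m x => (po (a-1) m / m !) * (x ^ (a+(m:ℝ)-1) * (1-x) ^ (1-a-1))
    with hFdef
  have hval : ∀ m : ℕ, ∫ x in Ioo (0:ℝ) 1, F m x
      = (Real.Gamma a * Real.Gamma (1-a)) * (po a m * po (a-1) m / ((m ! : ℝ) * m !)) := by
    intro m
    have hb := realBeta (s := a + (m:ℝ)) (t := 1-a) (by positivity) (by linarith)
    have hgam : Real.Gamma (a + (m:ℝ)) = po a m * Real.Gamma a := Gamma_po ha0 m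
    have hplus : a + (m:ℝ) + (1-a) = ((m:ℕ):ℝ) + 1 := by push_cast; ring
    rw [hplus, Real.Gamma_nat_eq_factorial m, hgam] at hb
    have e1 : ∫ x in Ioo (0:ℝ) 1, F m x
        = (po (a-1) m / m !) * ∫ x in Ioo (0:ℝ) 1, x ^ (a+(m:ℝ)-1) * (1-x) ^ (1-a-1) :=
      MeasureTheory.integral_const_mul _ _
    rw [e1, hb]
    have hf0 : ((m ! : ℕ):ℝ) ≠ 0 := by positivity
    field_simp
  have hFint : ∀ m : ℕ, Integrable (F m) (volume.restrict (Ioo (0:ℝ) 1)) := by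
    intro m
    exact (realBetaIntegrable (s := a + (m:ℝ)) (t := 1-a)
      (by positivity) (by linarith)).const_mul _
  have hnorm : ∀ m : ℕ, ∫ x in Ioo (0:ℝ) 1, ‖F m x‖
      = (Real.Gamma a * Real.Gamma (1-a)) * (po a m * |po (a-1) m| / ((m ! : ℝ) * m !)) := by
    intro m
    have hbpos : ∀ x ∈ Ioo (0:ℝ) 1, 0 ≤ x ^ (a+(m:ℝ)-1) * (1-x) ^ (1-a-1) := by
      intro x hx
      have h1 : (0:ℝ) ≤ x ^ (a+(m:ℝ)-1) := Real.rpow_nonneg hx.1.le _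
      have h2 : (0:ℝ) ≤ (1-x) ^ (1-a-1) := Real.rpow_nonneg (by linarith [hx.2]) _
      positivity
    have e0 : ∫ x in Ioo (0:ℝ) 1, ‖F m x‖
        = ∫ x in Ioo (0:ℝ) 1, (|po (a-1) m| / m !) * (x ^ (a+(m:ℝ)-1) * (1-x) ^ (1-a-1)) := by
      apply setIntegral_congr_fun measurableSet_Ioo
      intro x hx
      rw [hFdef]
      simp only [norm_mul, norm_div, Real.norm_eq_abs]
      rw [abs_of_nonneg (show (0:ℝ) ≤ ((m !:ℕ):ℝ) by positivity),
        abs_of_nonneg (Real.rpow_nonneg hx.1.le _),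
        abs_of_nonneg (Real.rpow_nonneg (by linarith [hx.2] : (0:ℝ) ≤ 1-x) _)]
    rw [e0]
    have hb := realBeta (s := a + (m:ℝ)) (t := 1-a) (by positivity) (by linarith)
    have hgam : Real.Gamma (a + (m:ℝ)) = po a m * Real.Gamma a := Gamma_po ha0 m
    have hplus : a + (m:ℝ) + (1-a) = ((m:ℕ):ℝ) + 1 := by push_cast; ring
    rw [hplus, Real.Gamma_nat_eq_factorial m, hgam] at hb
    rw [MeasureTheory.integral_const_mul, hb]
    have hf0 : ((m ! : ℕ):ℝ) ≠ 0 := by positivity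
    field_simp
  have hsumnorm : Summable (fun m => ∫ x in Ioo (0:ℝ) 1, ‖F m x‖) := by
    apply ((summable_gauss1_abs ha0 ha1).mul_left (Real.Gamma a * Real.Gamma (1-a))).congr
    intro m
    rw [hnorm m]
  have hswap := MeasureTheory.integral_tsum_of_summable_integral_norm hFint hsumnorm
  have hptwise : EqOn (fun x => ∑' m, F m x)
      (fun x => x ^ (a-1) * (1-x) ^ (2-2*a-1)) (Ioo (0:ℝ) 1) := by
    intro x hx
    have hx0 : (0:ℝ) < x := hx.1
    have hx1 : x < 1 := hx.2
    have hterm : ∀ m : ℕ, F m x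
        = (po (a-1) m * x ^ m / m !) * (x ^ (a-1) * (1-x) ^ (1-a-1)) := by
      intro m
      have hxp : x ^ (a+(m:ℝ)-1) = x ^ (a-1) * x ^ m := by
        rw [← Real.rpow_natCast x m, ← Real.rpow_add hx0]
        ring_nf
      rw [hFdef]
      simp only []
      rw [hxp]
      ring
    show (∑' m, F m x) = x ^ (a-1) * (1-x) ^ (2-2*a-1)
    calc (∑' m, F m x)
        = ∑' m, (po (a-1) m * x ^ m / m !) * (x ^ (a-1) * (1-x) ^ (1-a-1)) := tsum_congr hterm
      _ = (∑' m, po (a-1) m * x ^ m / m !) * (x ^ (a-1) * (1-x) ^ (1-a-1)) := tsum_mul_right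
      _ = (1-x) ^ (-(a-1)) * (x ^ (a-1) * (1-x) ^ (1-a-1)) := by
          rw [binomialSum (a-1) hx0.le hx1]
      _ = x ^ (a-1) * (1-x) ^ (2-2*a-1) := by
          rw [show 2-2*a-1 = -(a-1) + (1-a-1) by ring,
            Real.rpow_add (by linarith : (0:ℝ) < 1-x)]
          ring
  have hI : ∫ x in Ioo (0:ℝ) 1, (∑' m, F m x)
      = Real.Gamma a * Real.Gamma (2-2*a) / Real.Gamma (2-a) := by
    rw [setIntegral_congr_fun measurableSet_Ioo hptwise]
    have hb := realBeta (s := a) (t := 2-2*a) ha0 (by linarith)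
    rw [show a + (2-2*a) = 2-a by ring] at hb
    rw [show (2-2*a-1 : ℝ) = (2-2*a)-1 by ring]
    exact hb
  have hkey : (Real.Gamma a * Real.Gamma (1-a))
        * (∑' m, po a m * po (a-1) m / ((m ! : ℝ) * m !))
      = Real.Gamma a * Real.Gamma (2-2*a) / Real.Gamma (2-a) := by
    calc (Real.Gamma a * Real.Gamma (1-a))
          * (∑' m, po a m * po (a-1) m / ((m ! : ℝ) * m !))
        = ∑' m, (Real.Gamma a * Real.Gamma (1-a))
            * (po a m * po (a-1) m / ((m ! : ℝ) * m !)) := (tsum_mul_left).symm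
      _ = ∑' m, ∫ x in Ioo (0:ℝ) 1, F m x := tsum_congr (fun m => (hval m).symm)
      _ = ∫ x in Ioo (0:ℝ) 1, (∑' m, F m x) := hswap
      _ = Real.Gamma a * Real.Gamma (2-2*a) / Real.Gamma (2-a) := hI
  rw [eq_div_iff (by positivity : Real.Gamma (1-a) * Real.Gamma (2-a) ≠ 0)]
  rw [eq_div_iff hg2.ne'] at hkey
  nlinarith [hkey]

lemma key_ineq {a t : ℝ} (ha0 : 0 < a) (ha1 : a ≤ 1) (ht0 : 0 ≤ t) (ht1 : t ≤ 1) (m : ℕ) :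
    ((m:ℝ)+1) * (t ^ a * t ^ m) - (a + m) * t ^ (m+1) ≤ 1 - a := by
  rcases eq_or_lt_of_le ht0 with h0 | h0
  · rw [← h0, Real.zero_rpow ha0.ne']
    rw [zero_pow (Nat.succ_ne_zero m)]
    simp
    linarith
  · have hm1 : (0:ℝ) < (m:ℝ)+1 := by positivity
    set lam : ℝ := (a + m)/((m:ℝ)+1) with hlam
    have hlam0 : 0 ≤ lam := by positivity
    have hlam1 : lam ≤ 1 := by rw [hlam, div_le_one hm1]; linarith
    have hs0 : (0:ℝ) ≤ t ^ (m+1) := by positivity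
    have hgm := Real.geom_mean_le_arith_mean2_weighted hlam0
      (by linarith : (0:ℝ) ≤ 1 - lam) hs0 (by norm_num : (0:ℝ) ≤ 1)
      (by ring : lam + (1 - lam) = 1)
    rw [Real.one_rpow, mul_one, mul_one] at hgm
    have hrw : ((t ^ (m+1) : ℝ)) ^ lam = t ^ a * t ^ m := by
      rw [← Real.rpow_natCast t (m+1), ← Real.rpow_mul ht0]
      rw [show ((m+1:ℕ):ℝ) * lam = a + m by
        rw [hlam]; push_cast; field_simp]
      rw [Real.rpow_add h0, Real.rpow_natCast]
    rw [hrw] at hgm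
    have hmul := mul_le_mul_of_nonneg_left hgm hm1.le
    have hmul1 : ((m:ℝ)+1) * lam = a + m := by rw [hlam]; field_simp
    nlinarith [hmul, hmul1]

lemma sumC_eq {a : ℝ} (m : ℕ) :
    ((m:ℝ)+1) * (po a m / ((m+1)! : ℝ))^2 = (po a m / m !) * (po a m / (m+1)!) := by
  have hfac : (((m+1)! : ℕ):ℝ) = ((m:ℝ)+1) * (m ! : ℝ) := by
    push_cast [Nat.factorial_succ]; ring
  have h1 : ((m !: ℕ):ℝ) ≠ 0 := by positivity
  have h2 : (((m+1)! : ℕ):ℝ) ≠ 0 := by positivity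
  field_simp
  rw [hfac]
  ring

lemma hyp2_repr (a t : ℝ) :
    hyp2F1 a a 2 t = ∑' m : ℕ, ((m:ℝ)+1) * (po a m / ((m+1)! : ℝ))^2 * t ^ m := by
  unfold hyp2F1
  apply tsum_congr
  intro m
  have h2 : (ascPochhammer ℝ m).eval 2 = ((m+1)! : ℝ) := po_two_eval m
  have hpo : (ascPochhammer ℝ m).eval a = po a m := rfl
  rw [h2, hpo]
  have hfac : (((m+1)! : ℕ):ℝ) = ((m:ℝ)+1) * (m ! : ℝ) := by
    push_cast [Nat.factorial_succ]; ring
  have h1 : ((m !: ℕ):ℝ) ≠ 0 := by positivity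
  have h3 : (((m+1)! : ℕ):ℝ) ≠ 0 := by positivity
  field_simp
  rw [hfac]
  ring

lemma hyp1_repr {a : ℝ} (t : ℝ)
    (hsum : Summable (fun m : ℕ => (a+(m:ℝ)) * (po a m / ((m+1)! : ℝ))^2 * t^(m+1))) :
    hyp2F1 a (a-1) 1 t
      = 1 + (a-1) * ∑' m : ℕ, (a+(m:ℝ)) * (po a m / ((m+1)! : ℝ))^2 * t^(m+1) := by
  unfold hyp2F1
  have hterm : ∀ n : ℕ, ((ascPochhammer ℝ n).eval a * (ascPochhammer ℝ n).eval (a-1))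
      / ((ascPochhammer ℝ n).eval 1 * n.factorial) * t ^ n
      = po a n * po (a-1) n / ((n ! : ℝ) * n !) * t ^ n := by
    intro n
    rw [ascPochhammer_eval_one]
    rfl
  rw [tsum_congr hterm]
  have hshift : ∀ m : ℕ, po a (m+1) * po (a-1) (m+1) / (((m+1)! : ℝ) * (m+1)!) * t ^ (m+1)
      = (a-1) * ((a+(m:ℝ)) * (po a m / ((m+1)! : ℝ))^2 * t^(m+1)) := by
    intro m
    rw [po_shift, po_succ]
    have h3 : (((m+1)! : ℕ):ℝ) ≠ 0 := by positivity
    field_simp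
  have hsummf : Summable (fun n : ℕ => po a n * po (a-1) n / ((n ! : ℝ) * n !) * t ^ n) := by
    rw [← summable_nat_add_iff 1]
    apply (hsum.mul_left (a-1)).congr
    intro m
    rw [hshift m]
  rw [Summable.tsum_eq_zero_add hsummf]
  have h0 : po a 0 * po (a-1) 0 / ((0! : ℝ) * 0!) * t ^ 0 = 1 := by
    rw [po_zero, po_zero]
    norm_num
  rw [h0]
  congr 1
  rw [← tsum_mul_left]
  exact tsum_congr hshift

theorem stmt_8 (q : ℝ) (hq1 : 1 ≤ q) (hq2 : q < 2) :
    IsGreatest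
      ((fun t : ℝ =>
          2 / (2 - q) * hyp2F1 (q / 2) (q / 2 - 1) 1 t
            + t ^ (q / 2) * hyp2F1 (q / 2) (q / 2) 2 t) '' Set.Icc (0 : ℝ) 1)
      (2 * Real.Gamma (2 - q) / (Real.Gamma (2 - q / 2)) ^ 2) ∧
    (2 / (2 - q) * hyp2F1 (q / 2) (q / 2 - 1) 1 1
        + (1 : ℝ) ^ (q / 2) * hyp2F1 (q / 2) (q / 2) 2 1)
      = 2 * Real.Gamma (2 - q) / (Real.Gamma (2 - q / 2)) ^ 2 := by
  set a : ℝ := q / 2 with hadef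
  have ha0 : 0 < a := by rw [hadef]; linarith
  have ha2 : a < 1 := by rw [hadef]; linarith
  have h1a : (1:ℝ) - a ≠ 0 := by linarith
  have h2q : 2 - q = 2*(1-a) := by rw [hadef]; ring
  have hg1 : 0 < Real.Gamma (1-a) := Real.Gamma_pos_of_pos (by linarith)
  have hg2 : 0 < Real.Gamma (2-a) := Real.Gamma_pos_of_pos (by linarith)
  have hΓ : Real.Gamma (2-a) = (1-a) * Real.Gamma (1-a) := by
    rw [show (2-a : ℝ) = (1-a)+1 by ring, Real.Gamma_add_one h1a]
  have sumC : Summable (fun m : ℕ => ((m:ℝ)+1) * (po a m / ((m+1)! : ℝ))^2) :=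
    (summable_master ha0 ha2).congr (fun m => (sumC_eq m).symm)
  have sumB : Summable (fun m : ℕ => (a+(m:ℝ)) * (po a m / ((m+1)! : ℝ))^2) := by
    apply Summable.of_nonneg_of_le _ _ sumC
    · intro m
      have := po_pos ha0 m
      positivity
    · intro m
      apply mul_le_mul_of_nonneg_right _ (sq_nonneg _)
      linarith
  have sumBt : ∀ t : ℝ, 0 ≤ t → t ≤ 1 →
      Summable (fun m : ℕ => (a+(m:ℝ)) * (po a m / ((m+1)! : ℝ))^2 * t^(m+1)) := by
    intro t ht0 ht1
    apply Summable.of_nonneg_of_le _ _ sumB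
    · intro m
      have := po_pos ha0 m
      positivity
    · intro m
      have hpow : t^(m+1) ≤ 1 := pow_le_one₀ ht0 ht1
      have hnn : (0:ℝ) ≤ (a+(m:ℝ)) * (po a m / ((m+1)! : ℝ))^2 := by
        have := po_pos ha0 m
        positivity
      nlinarith [hnn, hpow]
  have sumCt : ∀ t : ℝ, 0 ≤ t → t ≤ 1 →
      Summable (fun m : ℕ => ((m:ℝ)+1) * (po a m / ((m+1)! : ℝ))^2 * (t^a * t^m)) := by
    intro t ht0 ht1
    apply Summable.of_nonneg_of_le _ _ sumC
    · intro m
      have := po_pos ha0 m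
      have h1 : (0:ℝ) ≤ t ^ a := Real.rpow_nonneg ht0 a
      positivity
    · intro m
      have hpow : t^a * t^m ≤ 1 := by
        have h1 : t ^ a ≤ 1 := Real.rpow_le_one ht0 ht1 ha0.le
        have h2 : t ^ m ≤ 1 := pow_le_one₀ ht0 ht1
        have h3 : (0:ℝ) ≤ t ^ a := Real.rpow_nonneg ht0 a
        nlinarith
      have hnn : (0:ℝ) ≤ ((m:ℝ)+1) * (po a m / ((m+1)! : ℝ))^2 := by positivity
      nlinarith [hnn, hpow]
  -- representation of the objective
  have hrepr : ∀ t : ℝ, 0 ≤ t → t ≤ 1 →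
      2 / (2 - q) * hyp2F1 a (a - 1) 1 t + t ^ a * hyp2F1 a a 2 t
        = 1/(1-a) + ((∑' m : ℕ, ((m:ℝ)+1) * (po a m / ((m+1)! : ℝ))^2 * (t^a * t^m))
            - (∑' m : ℕ, (a+(m:ℝ)) * (po a m / ((m+1)! : ℝ))^2 * t^(m+1))) := by
    intro t ht0 ht1
    rw [hyp1_repr t (sumBt t ht0 ht1), hyp2_repr a t]
    have htsa : t ^ a * (∑' m : ℕ, ((m:ℝ)+1) * (po a m / ((m+1)! : ℝ))^2 * t^m)
        = ∑' m : ℕ, ((m:ℝ)+1) * (po a m / ((m+1)! : ℝ))^2 * (t^a * t^m) := by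
      rw [← tsum_mul_left]
      exact tsum_congr (fun m => by ring)
    rw [htsa]
    have hfrac : 2/(2-q) = 1/(1-a) := by
      rw [h2q, div_eq_div_iff (by linarith) (by linarith)]
      ring
    rw [hfrac]
    linear_combination (-(∑' m : ℕ, (a+(m:ℝ)) * (po a m / ((m+1)! : ℝ))^2 * t^(m+1))) * one_div_mul_cancel h1a
  -- value at t = 1
  have hyp1one : hyp2F1 a (a-1) 1 1
      = Real.Gamma (2-2*a) / (Real.Gamma (1-a) * Real.Gamma (2-a)) := by
    rw [← gauss1 ha0 ha2]
    unfold hyp2F1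
    apply tsum_congr
    intro n
    rw [ascPochhammer_eval_one, one_pow, mul_one]
    rfl
  have hyp2one : hyp2F1 a a 2 1 = Real.Gamma (2-2*a) / Real.Gamma (2-a)^2 := by
    rw [hyp2_repr, ← gauss2 ha0 ha2]
    apply tsum_congr
    intro m
    rw [one_pow, mul_one, sumC_eq]
  have hVal : 2 / (2 - q) * hyp2F1 a (a - 1) 1 1 + (1:ℝ) ^ a * hyp2F1 a a 2 1
      = 2 * Real.Gamma (2 - q) / (Real.Gamma (2 - a)) ^ 2 := by
    rw [Real.one_rpow, one_mul, hyp1one, hyp2one,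
      show (2:ℝ) - q = 2 - 2*a by rw [h2q]; ring]
    have hfrac : 2/(2-q) = 1/(1-a) := by
      rw [h2q, div_eq_div_iff (by linarith) (by linarith)]
      ring
    rw [show (2:ℝ) - q = 2 - 2*a by rw [h2q]; ring] at hfrac
    rw [hfrac, hΓ]
    field_simp
    ring
  constructor
  · constructor
    · exact ⟨1, ⟨by norm_num, le_refl 1⟩, hVal⟩
    · rintro y ⟨t, ht, rfl⟩
      obtain ⟨ht0, ht1⟩ := ht
      have hle : (∑' m : ℕ, ((m:ℝ)+1) * (po a m / ((m+1)! : ℝ))^2 * (t^a * t^m))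
            - (∑' m : ℕ, (a+(m:ℝ)) * (po a m / ((m+1)! : ℝ))^2 * t^(m+1))
          ≤ (∑' m : ℕ, ((m:ℝ)+1) * (po a m / ((m+1)! : ℝ))^2 * ((1:ℝ)^a * (1:ℝ)^m))
            - (∑' m : ℕ, (a+(m:ℝ)) * (po a m / ((m+1)! : ℝ))^2 * (1:ℝ)^(m+1)) := by
        rw [← Summable.tsum_sub (sumCt t ht0 ht1) (sumBt t ht0 ht1),
          ← Summable.tsum_sub (sumCt 1 (by norm_num) (le_refl 1)) (sumBt 1 (by norm_num) (le_refl 1))]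
        apply Summable.tsum_le_tsum _ ((sumCt t ht0 ht1).sub (sumBt t ht0 ht1))
          ((sumCt 1 (by norm_num) (le_refl 1)).sub (sumBt 1 (by norm_num) (le_refl 1)))
        intro m
        have hkey := key_ineq ha0 ha2.le ht0 ht1 m
        have hW : (0:ℝ) ≤ (po a m / ((m+1)! : ℝ))^2 := sq_nonneg _
        have hmul := mul_le_mul_of_nonneg_left hkey hW
        rw [Real.one_rpow, one_pow, one_pow]
        nlinarith [hmul]
      calc 2 / (2 - q) * hyp2F1 a (a - 1) 1 t + t ^ a * hyp2F1 a a 2 t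
          = 1/(1-a) + ((∑' m : ℕ, ((m:ℝ)+1) * (po a m / ((m+1)! : ℝ))^2 * (t^a * t^m))
            - (∑' m : ℕ, (a+(m:ℝ)) * (po a m / ((m+1)! : ℝ))^2 * t^(m+1))) :=
            hrepr t ht0 ht1
        _ ≤ 1/(1-a) + ((∑' m : ℕ, ((m:ℝ)+1) * (po a m / ((m+1)! : ℝ))^2 * ((1:ℝ)^a * (1:ℝ)^m))
            - (∑' m : ℕ, (a+(m:ℝ)) * (po a m / ((m+1)! : ℝ))^2 * (1:ℝ)^(m+1))) := by
            linarith [hle]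
        _ = 2 / (2 - q) * hyp2F1 a (a - 1) 1 1 + (1:ℝ) ^ a * hyp2F1 a a 2 1 :=
            (hrepr 1 (by norm_num) (le_refl 1)).symm
        _ = 2 * Real.Gamma (2 - q) / (Real.Gamma (2 - a)) ^ 2 := hVal
  · exact hVal
end

section
/- Let d ≥ 1 be an integer and u ∈ L²((0,1), x dx). Then ∫_0^1 |∫_r^1 ρ^{1−d} u(ρ) dρ|² r^{2d−1} dr ≤ (1/j_{d−1}²) ∫_0^1 ρ |u(ρ)|² dρ, where j_{d−1} is the smallest positive zero of the Bessel function J_{d−1}. -/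
open MeasureTheory

/-- The Bessel function of the first kind of nonnegative integer order. -/
noncomputable def besselJ (a : ℕ) (x : ℝ) : ℝ :=
  ∑' k : ℕ, (-1 : ℝ) ^ k / (k.factorial * Real.Gamma (k + a + 1)) * (x / 2) ^ (2 * k + a)

open scoped Nat ENNReal

noncomputable def besselP (a : ℕ) (x : ℝ) : ℝ :=
  ∑' k : ℕ, (-1 : ℝ) ^ k / (k ! * (k + a)!) * x ^ (2 * k) / 2 ^ (2 * k + a)

lemma summable_mul_pow (z : ℝ) : Summable (fun k : ℕ => (k : ℝ) * z ^ k / k !) := by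
  rw [← summable_nat_add_iff 1]
  have : (fun k : ℕ => ((k + 1 : ℕ) : ℝ) * z ^ (k + 1) / (k + 1)!)
      = fun k : ℕ => z * (z ^ k / k !) := by
    funext k
    rw [Nat.factorial_succ]
    push_cast
    have hk : ((k : ℝ) + 1) ≠ 0 := by positivity
    field_simp
    ring
  rw [this]
  exact (Real.summable_pow_div_factorial z).mul_left z

lemma norm_bessel_term_le (a : ℕ) (x : ℝ) (k : ℕ) :
    ‖(-1 : ℝ) ^ k / (k ! * (k + a)!) * x ^ (2 * k) / 2 ^ (2 * k + a)‖ ≤ (x ^ 2) ^ k / k ! := by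
  have hterm : (-1 : ℝ) ^ k / (k ! * (k + a)!) * x ^ (2 * k) / 2 ^ (2 * k + a)
      = (-1 : ℝ) ^ k * ((x ^ 2) ^ k / (k ! * (k + a)! * 2 ^ (2 * k + a))) := by
    rw [← pow_mul]; ring
  rw [hterm, norm_mul, norm_pow, norm_neg, norm_one, one_pow, one_mul, Real.norm_eq_abs,
    abs_of_nonneg (by positivity)]
  have h1 : (1:ℝ) ≤ (k + a)! := by exact_mod_cast Nat.one_le_iff_ne_zero.2 (Nat.factorial_ne_zero _)
  have h2 : (1:ℝ) ≤ 2 ^ (2 * k + a) := one_le_pow₀ (by norm_num)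
  have hk : (0:ℝ) < k ! := by exact_mod_cast Nat.factorial_pos k
  calc (x ^ 2) ^ k / (↑k ! * ↑(k + a)! * 2 ^ (2 * k + a))
      ≤ (x ^ 2) ^ k / (↑k ! * 1 * 1) := by gcongr <;> positivity
    _ = (x ^ 2) ^ k / k ! := by ring

lemma besselP_summable (a : ℕ) (x : ℝ) :
    Summable (fun k : ℕ => (-1 : ℝ) ^ k / (k ! * (k + a)!) * x ^ (2 * k) / 2 ^ (2 * k + a)) :=
  Summable.of_norm_bounded (Real.summable_pow_div_factorial (x ^ 2))
    (norm_bessel_term_le a x)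

-- besselJ a x = x^a * besselP a x
lemma besselJ_eq_pow_mul (a : ℕ) (x : ℝ) : besselJ a x = x ^ a * besselP a x := by
  rw [besselP, ← tsum_mul_left, besselJ]
  apply tsum_congr
  intro k
  have hg : Real.Gamma ((k : ℝ) + a + 1) = (k + a)! := by
    rw [show ((k : ℝ) + a + 1) = ((k + a : ℕ) : ℝ) + 1 by push_cast; ring,
      Real.Gamma_nat_eq_factorial]
  rw [hg, div_pow]
  have : x ^ (2 * k + a) = x ^ a * x ^ (2 * k) := by rw [← pow_add]; ring_nf
  rw [this]
  ring

/-- coefficient -/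
noncomputable def bc (a k : ℕ) : ℝ := (-1 : ℝ) ^ k / (k ! * (k + a)!) / 2 ^ (2 * k + a)

lemma besselP_eq (a : ℕ) (x : ℝ) : besselP a x = ∑' k : ℕ, bc a k * x ^ (2 * k) := by
  unfold besselP bc; apply tsum_congr; intro k; ring

lemma bc_summable (a : ℕ) (x : ℝ) : Summable (fun k : ℕ => bc a k * x ^ (2 * k)) := by
  have := besselP_summable a x
  apply this.congr
  intro k; unfold bc; ring

lemma norm_bc_le (a : ℕ) (k : ℕ) : |bc a k| ≤ 1 / k ! := by
  have := norm_bessel_term_le a 1 k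
  simp only [one_pow, mul_one, Real.norm_eq_abs, one_pow] at this
  calc |bc a k| = |(-1 : ℝ) ^ k / (↑k ! * ↑(k + a)!) * 1 ^ (2*k) / 2 ^ (2 * k + a)| := by
        unfold bc; rw [one_pow, mul_one]
    _ ≤ (1^2) ^ k / k ! := norm_bessel_term_le a 1 k
    _ = 1 / k ! := by norm_num

lemma besselP_hasDerivAt (a : ℕ) (x : ℝ) :
    HasDerivAt (besselP a) (-x * besselP (a + 1) x) x := by
  set R : ℝ := |x| + 1 with hR
  have hR1 : 1 ≤ R := by simp only [hR]; linarith [abs_nonneg x]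
  have hR0 : 0 < R := lt_of_lt_of_le one_pos hR1
  have hxR : x ∈ Metric.ball (0 : ℝ) R := by
    simp [Metric.mem_ball, Real.dist_eq, hR]
  have hbound : ∀ (k : ℕ) (y : ℝ), y ∈ Metric.ball (0 : ℝ) R →
      ‖bc a k * (↑(2 * k) * y ^ (2 * k - 1))‖ ≤ 2 * ((k : ℝ) * (R ^ 2) ^ k / k !) := by
    intro k y hy
    have hyR : |y| ≤ R := by
      simp [Metric.mem_ball, Real.dist_eq] at hy; linarith
    rcases Nat.eq_zero_or_pos k with hk | hk
    · subst hk; simp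
    · have h1 : ‖bc a k * (↑(2 * k) * y ^ (2 * k - 1))‖
          = |bc a k| * ((2 * k : ℕ) * |y| ^ (2 * k - 1)) := by
        rw [norm_mul, norm_mul, norm_pow, Real.norm_eq_abs, Real.norm_eq_abs,
          Real.norm_eq_abs, Nat.abs_cast]
      rw [h1]
      have h2 : |y| ^ (2 * k - 1) ≤ R ^ (2 * k) := by
        calc |y| ^ (2 * k - 1) ≤ R ^ (2 * k - 1) := by
              gcongr
          _ ≤ R ^ (2 * k) := pow_le_pow_right₀ hR1 (Nat.sub_le _ _)
      calc |bc a k| * ((2 * k : ℕ) * |y| ^ (2 * k - 1))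
          ≤ (1 / k !) * ((2 * k : ℕ) * R ^ (2 * k)) := by
            apply mul_le_mul (norm_bc_le a k) _ (by positivity) (by positivity)
            gcongr
        _ = 2 * ((k : ℝ) * (R ^ 2) ^ k / k !) := by
            rw [← pow_mul]; push_cast; ring
  have key : HasDerivAt (fun y => ∑' k : ℕ, bc a k * y ^ (2 * k))
      (∑' k : ℕ, bc a k * (↑(2 * k) * x ^ (2 * k - 1))) x := by
    apply hasDerivAt_tsum_of_isPreconnected
      ((summable_mul_pow (R ^ 2)).mul_left 2) Metric.isOpen_ball
      (convex_ball (0:ℝ) R).isPreconnected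
      (fun k y _ => (hasDerivAt_pow (2 * k) y).const_mul (bc a k))
      hbound hxR (bc_summable a x) hxR
  have hfun : (fun y => ∑' k : ℕ, bc a k * y ^ (2 * k)) = besselP a := by
    funext y; rw [besselP_eq]
  rw [hfun] at key
  convert key using 1
  -- show -x * besselP (a+1) x = ∑' k, bc a k * (2k * x^(2k-1))
  have hsum : Summable (fun k : ℕ => bc a k * (↑(2 * k) * x ^ (2 * k - 1))) := by
    apply Summable.of_norm_bounded ((summable_mul_pow (R ^ 2)).mul_left 2)
    intro k; exact hbound k x hxR
  rw [Summable.tsum_eq_zero_add hsum]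
  simp only [Nat.mul_zero, Nat.cast_zero, zero_mul, mul_zero, zero_add, pow_zero]
  rw [besselP_eq, ← tsum_mul_left]
  apply tsum_congr
  intro k
  have he : 2 * (k + 1) - 1 = 2 * k + 1 := by omega
  rw [he]
  unfold bc
  rw [pow_succ x (2 * k)]
  have hfac1 : ((k + 1)! : ℝ) = (k + 1) * k ! := by
    rw [Nat.factorial_succ]; push_cast; ring
  have hidx : k + 1 + a = k + (a + 1) := by omega
  rw [hidx]
  have h2p : (2 : ℝ) ^ (2 * (k + 1) + a) = 2 * 2 ^ (2 * k + (a + 1)) := by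
    rw [show 2 * (k + 1) + a = (2 * k + (a + 1)) + 1 by omega, pow_succ]; ring
  rw [hfac1, h2p, pow_succ (-1 : ℝ) k]
  have hk0 : ((k : ℝ) + 1) ≠ 0 := by positivity
  have hfk : (k ! : ℝ) ≠ 0 := by exact_mod_cast Nat.factorial_ne_zero k
  have hfka : ((k + (a + 1))! : ℝ) ≠ 0 := by exact_mod_cast Nat.factorial_ne_zero _
  have h2 : (2 : ℝ) ^ (2 * k + (a + 1)) ≠ 0 := by positivity
  push_cast
  field_simp

lemma summable_aux (z c : ℝ) : Summable (fun k : ℕ => c * ((k : ℝ) + c) * z ^ k / k !) := by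
  have h1 := (summable_mul_pow z).mul_left c
  have h2 := (Real.summable_pow_div_factorial z).mul_left (c * c)
  apply ((h1.add h2).congr)
  intro k; ring

lemma pow_mul_besselP_hasDerivAt (a : ℕ) (x : ℝ) :
    HasDerivAt (fun y => y ^ (2 * a + 2) * besselP (a + 1) y)
      (x ^ (2 * a + 1) * besselP a x) x := by
  set R : ℝ := |x| + 1 with hR
  have hR1 : 1 ≤ R := by simp only [hR]; linarith [abs_nonneg x]
  have hR0 : 0 < R := lt_of_lt_of_le one_pos hR1
  have hxR : x ∈ Metric.ball (0 : ℝ) R := by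
    simp [Metric.mem_ball, Real.dist_eq, hR]
  have hbound : ∀ (k : ℕ) (y : ℝ), y ∈ Metric.ball (0 : ℝ) R →
      ‖bc (a + 1) k * (↑(2 * k + (2 * a + 2)) * y ^ (2 * k + (2 * a + 2) - 1))‖
        ≤ (2 * R ^ (2*a+1)) * ((k : ℝ) + (a + 1)) * (R ^ 2) ^ k / k ! := by
    intro k y hy
    have hyR : |y| ≤ R := by
      simp [Metric.mem_ball, Real.dist_eq] at hy; linarith
    have h1 : ‖bc (a+1) k * (↑(2 * k + (2 * a + 2)) * y ^ (2 * k + (2 * a + 2) - 1))‖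
        = |bc (a+1) k| * ((2 * k + (2*a+2) : ℕ) * |y| ^ (2 * k + (2*a+2) - 1)) := by
      rw [norm_mul, norm_mul, norm_pow, Real.norm_eq_abs, Real.norm_eq_abs,
        Real.norm_eq_abs, Nat.abs_cast]
    rw [h1]
    have he : 2 * k + (2 * a + 2) - 1 = 2 * k + (2 * a + 1) := by omega
    rw [he]
    have h2 : |y| ^ (2 * k + (2 * a + 1)) ≤ R ^ (2 * k) * R ^ (2 * a + 1) := by
      rw [← pow_add]; gcongr
    calc |bc (a+1) k| * ((2 * k + (2*a+2) : ℕ) * |y| ^ (2 * k + (2*a+1)))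
        ≤ (1 / k !) * ((2 * k + (2*a+2) : ℕ) * (R ^ (2*k) * R ^ (2*a+1))) := by
          apply mul_le_mul (norm_bc_le (a+1) k) _ (by positivity) (by positivity)
          gcongr
      _ = (2 * R ^ (2*a+1)) * ((k : ℝ) + (a + 1)) * (R ^ 2) ^ k / k ! := by
          rw [← pow_mul]; push_cast; ring
  have key : HasDerivAt (fun y => ∑' k : ℕ, bc (a+1) k * y ^ (2 * k + (2 * a + 2)))
      (∑' k : ℕ, bc (a+1) k * (↑(2 * k + (2 * a + 2)) * x ^ (2 * k + (2 * a + 2) - 1))) x := by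
    apply hasDerivAt_tsum_of_isPreconnected
      (((summable_aux ((R:ℝ) ^ 2) ((a:ℝ)+1)).mul_left (2 * R ^ (2*a+1) / ((a:ℝ)+1))).congr ?_)
      Metric.isOpen_ball (convex_ball (0:ℝ) R).isPreconnected
      (fun k y _ => (hasDerivAt_pow (2 * k + (2 * a + 2)) y).const_mul (bc (a+1) k))
      hbound hxR ?_ hxR
    · intro k
      have ha1 : ((a : ℝ) + 1) ≠ 0 := by positivity
      field_simp
    · -- summable at x
      apply Summable.of_norm_bounded
        ((((Real.summable_pow_div_factorial (x ^ 2)).mul_left (|x| ^ (2*a+2)))))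
      intro k
      rw [norm_mul, norm_pow, Real.norm_eq_abs, Real.norm_eq_abs]
      have : |x| ^ (2 * k + (2 * a + 2)) = |x| ^ (2*a+2) * (x ^ 2) ^ k := by
        rw [pow_add, pow_mul, sq_abs]; ring
      rw [this]
      have hb := norm_bc_le (a+1) k
      have h0 : (0:ℝ) < k ! := by exact_mod_cast Nat.factorial_pos k
      calc |bc (a+1) k| * (|x| ^ (2*a+2) * (x^2)^k)
          ≤ (1 / k !) * (|x| ^ (2*a+2) * (x^2)^k) := by gcongr
        _ = |x| ^ (2*a+2) * ((x^2)^k / k !) := by ring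
  have hfun : (fun y : ℝ => ∑' k : ℕ, bc (a+1) k * y ^ (2 * k + (2 * a + 2)))
      = fun y => y ^ (2 * a + 2) * besselP (a + 1) y := by
    funext y
    rw [besselP_eq, ← tsum_mul_left]
    apply tsum_congr
    intro k
    rw [pow_add]
    ring
  rw [hfun] at key
  convert key using 1
  rw [besselP_eq, ← tsum_mul_left]
  apply tsum_congr
  intro k
  have he : 2 * k + (2 * a + 2) - 1 = 2 * k + (2 * a + 1) := by omega
  rw [he]
  unfold bc
  have hfac : ((k + (a + 1))! : ℝ) = (k + a + 1) * (k + a)! := by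
    rw [show k + (a + 1) = (k + a) + 1 by omega, Nat.factorial_succ]
    push_cast; ring
  have h2p : (2 : ℝ) ^ (2 * k + (a + 1)) = 2 * 2 ^ (2 * k + a) := by
    rw [show 2 * k + (a + 1) = (2 * k + a) + 1 by omega, pow_succ]; ring
  have hxp : x ^ (2 * k + (2 * a + 1)) = x ^ (2 * a + 1) * x ^ (2 * k) := by
    rw [← pow_add]; ring_nf
  rw [hfac, h2p, hxp]
  have hfk : (k ! : ℝ) ≠ 0 := by exact_mod_cast Nat.factorial_ne_zero k
  have hfka : ((k + a)! : ℝ) ≠ 0 := by exact_mod_cast Nat.factorial_ne_zero _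
  have hka : ((k : ℝ) + a + 1) ≠ 0 := by positivity
  have h2 : (2 : ℝ) ^ (2 * k + a) ≠ 0 := by positivity
  push_cast
  field_simp
  ring

lemma besselP_continuous (a : ℕ) : Continuous (besselP a) := by
  rw [continuous_iff_continuousAt]
  exact fun x => (besselP_hasDerivAt a x).continuousAt

lemma besselP_zero_pos (a : ℕ) : 0 < besselP a 0 := by
  rw [besselP_eq]
  rw [tsum_eq_single 0 (by intro k hk; rw [zero_pow (by omega), mul_zero])]
  rw [pow_zero, mul_one]
  unfold bc
  positivity

section Pos
variable (a : ℕ) (j : ℝ) (hj0 : 0 < j) (hjz : besselJ a j = 0)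
  (hjmin : ∀ x : ℝ, 0 < x → x < j → besselJ a x ≠ 0)

include hjmin in
lemma besselP_pos : ∀ x : ℝ, 0 ≤ x → x < j → 0 < besselP a x := by
  intro x hx0 hxj
  rcases eq_or_lt_of_le hx0 with h | h
  · rw [← h]; exact besselP_zero_pos a
  have hne : besselP a x ≠ 0 := by
    intro h0
    exact hjmin x h hxj (by rw [besselJ_eq_pow_mul, h0, mul_zero])
  rcases lt_trichotomy 0 (besselP a x) with h1 | h1 | h1
  · exact h1
  · exact absurd h1.symm hne
  -- IVT: there is a zero in (0, x)
  exfalso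
  have hcont : ContinuousOn (besselP a) (Set.Icc 0 x) := (besselP_continuous a).continuousOn
  have hmem : (0:ℝ) ∈ Set.Icc (besselP a x) (besselP a 0) :=
    ⟨le_of_lt h1, le_of_lt (besselP_zero_pos a)⟩
  obtain ⟨c, hc, hc0⟩ := intermediate_value_Icc' hx0 hcont hmem
  have hcpos : 0 < c := by
    rcases eq_or_lt_of_le hc.1 with h2 | h2
    · exfalso; rw [← h2] at hc0; exact absurd hc0.symm (ne_of_lt (besselP_zero_pos a))
    · exact h2
  have hcx : c < j := lt_of_le_of_lt hc.2 hxj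
  exact hjmin c hcpos hcx (by rw [besselJ_eq_pow_mul, hc0, mul_zero])

include hj0 hjz in
lemma besselP_j_zero : besselP a j = 0 := by
  have := hjz
  rw [besselJ_eq_pow_mul] at this
  have hj : j ^ a ≠ 0 := pow_ne_zero a (ne_of_gt hj0)
  exact (mul_eq_zero.1 this).resolve_left hj

include hj0 hjmin in
lemma besselP_succ_pos : ∀ x : ℝ, 0 < x → x ≤ j → 0 < besselP (a + 1) x := by
  intro x hx0 hxj
  set F : ℝ → ℝ := fun y => y ^ (2 * a + 2) * besselP (a + 1) y with hF
  have hderiv : ∀ y : ℝ, HasDerivAt F (y ^ (2 * a + 1) * besselP a y) y :=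
    fun y => pow_mul_besselP_hasDerivAt a y
  have hmono : StrictMonoOn F (Set.Icc 0 j) := by
    apply strictMonoOn_of_deriv_pos (convex_Icc 0 j)
      (fun y _ => ((hderiv y).continuousAt.continuousWithinAt))
    intro y hy
    rw [interior_Icc] at hy
    rw [(hderiv y).deriv]
    exact mul_pos (pow_pos hy.1 _) (besselP_pos a j hjmin y (le_of_lt hy.1) hy.2)
  have hFx : 0 < F x := by
    have h0 : F 0 = 0 := by simp [hF, zero_pow]
    have := hmono (Set.mem_Icc.2 ⟨le_refl 0, le_of_lt hj0⟩)
      (Set.mem_Icc.2 ⟨le_of_lt hx0, hxj⟩) hx0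
    rw [h0] at this; exact this
  have hxp : (0:ℝ) < x ^ (2 * a + 2) := pow_pos hx0 _
  by_contra hcon
  push_neg at hcon
  have hFx' : 0 < x ^ (2 * a + 2) * besselP (a + 1) x := hFx
  nlinarith [mul_nonpos_of_nonneg_of_nonpos (le_of_lt hxp) hcon]

include hj0 hjz in
lemma integ1 (r : ℝ) (hr : 0 < r) (hr1 : r ≤ 1) :
    ∫ ρ in Set.Ioo r 1, ρ * besselP (a + 1) (j * ρ) = besselP a (j * r) / j ^ 2 := by
  have hD : ∀ ρ : ℝ, ρ ∈ Set.uIcc r 1 → HasDerivAt (fun t => -(besselP a (j * t)) / j ^ 2)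
      (ρ * besselP (a + 1) (j * ρ)) ρ := by
    intro ρ _
    have h2 : HasDerivAt (fun t : ℝ => j * t) j ρ := by
      simpa using (hasDerivAt_id ρ).const_mul j
    have h1 := (besselP_hasDerivAt a (j * ρ)).comp ρ h2
    have h3 := h1.neg.div_const (j ^ 2)
    refine h3.congr_deriv ?_
    symm
    have hj : j ≠ 0 := ne_of_gt hj0
    field_simp
  have hcont : Continuous fun ρ : ℝ => ρ * besselP (a + 1) (j * ρ) :=
    continuous_id.mul ((besselP_continuous (a + 1)).comp (continuous_const.mul continuous_id))
  have hftc := intervalIntegral.integral_eq_sub_of_hasDerivAt hD (hcont.intervalIntegrable _ _)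
  rw [intervalIntegral.integral_of_le hr1, integral_Ioc_eq_integral_Ioo] at hftc
  rw [hftc, mul_one, besselP_j_zero a j hj0 hjz]
  ring

include hj0 in
lemma integ2 (ρ : ℝ) (h0 : 0 ≤ ρ) :
    ∫ r in Set.Ioo 0 ρ, r ^ (2 * a + 1) * besselP a (j * r)
      = ρ ^ (2 * a + 2) * besselP (a + 1) (j * ρ) := by
  have hD : ∀ r : ℝ, r ∈ Set.uIcc 0 ρ → HasDerivAt
      (fun t : ℝ => t ^ (2 * a + 2) * besselP (a + 1) (j * t))
      (r ^ (2 * a + 1) * besselP a (j * r)) r := by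
    intro r _
    have hj : j ≠ 0 := ne_of_gt hj0
    · have h2 : HasDerivAt (fun t : ℝ => j * t) j r := by
        simpa using (hasDerivAt_id r).const_mul j
      have h1 := (pow_mul_besselP_hasDerivAt a (j * r)).comp r h2
      have h3 := h1.div_const (j ^ (2 * a + 2))
      have hfun : (fun t : ℝ => t ^ (2 * a + 2) * besselP (a + 1) (j * t))
          = fun t : ℝ => ((j * t) ^ (2 * a + 2) * besselP (a + 1) (j * t)) / j ^ (2 * a + 2) := by
        funext t
        rw [mul_pow]
        field_simp
      rw [hfun]
      refine h3.congr_deriv ?_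
      symm
      rw [mul_pow]
      field_simp
      ring
  have hcont : Continuous fun r : ℝ => r ^ (2 * a + 1) * besselP a (j * r) :=
    (continuous_pow _).mul ((besselP_continuous a).comp (continuous_const.mul continuous_id))
  have hftc := intervalIntegral.integral_eq_sub_of_hasDerivAt hD (hcont.intervalIntegrable _ _)
  rw [intervalIntegral.integral_of_le h0, integral_Ioc_eq_integral_Ioo] at hftc
  rw [hftc, zero_pow (by omega), zero_mul, sub_zero]
end Pos

theorem stmt_13 (d : ℤ) (hd : 1 ≤ d) (u : ℝ → ℂ)
    (hu : IntegrableOn (fun ρ : ℝ => ρ * ‖u ρ‖ ^ 2) (Set.Ioo (0 : ℝ) 1))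
    (j : ℝ) (hj0 : 0 < j) (hjz : besselJ (d - 1).toNat j = 0)
    (hjmin : ∀ x : ℝ, 0 < x → x < j → besselJ (d - 1).toNat x ≠ 0) :
    (∫ r in Set.Ioo (0 : ℝ) 1,
        ‖∫ ρ in Set.Ioo r 1, ((ρ ^ (1 - d) : ℝ) : ℂ) * u ρ‖ ^ 2
          * r ^ (2 * d - 1))
      ≤ 1 / j ^ 2 * ∫ ρ in Set.Ioo (0 : ℝ) 1, ρ * ‖u ρ‖ ^ 2 := by
  set a : ℕ := (d - 1).toNat with ha
  have had : (a : ℤ) = d - 1 := Int.toNat_of_nonneg (by omega)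
  have hd2 : 2 * d - 1 = ((2 * a + 1 : ℕ) : ℤ) := by push_cast; omega
  have h1d : 1 - d = -(a : ℤ) := by omega
  set I : Set ℝ := Set.Ioo (0 : ℝ) 1 with hI
  set Φ : ℝ → ℝ := fun ρ => besselP (a + 1) (j * ρ) with hΦ
  set W : ℝ → ℝ := fun r => besselP a (j * r) with hW
  set D : ℝ → ℝ := fun ρ => ‖u ρ‖ ^ 2 / (ρ ^ (2 * a + 1) * Φ ρ) with hD
  have hΦpos : ∀ ρ : ℝ, 0 < ρ → ρ ≤ 1 → 0 < Φ ρ := fun ρ h1 h2 =>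
    besselP_succ_pos a j hj0 hjmin (j * ρ) (mul_pos hj0 h1) (by nlinarith)
  have hWpos : ∀ r : ℝ, 0 < r → r < 1 → 0 < W r := fun r h1 h2 =>
    besselP_pos a j hjmin (j * r) (le_of_lt (mul_pos hj0 h1)) (by nlinarith)
  have hRHS0 : 0 ≤ ∫ ρ in I, ρ * ‖u ρ‖ ^ 2 :=
    setIntegral_nonneg measurableSet_Ioo (fun ρ hρ => mul_nonneg (le_of_lt hρ.1) (sq_nonneg _))
  have hRHS : 0 ≤ 1 / j ^ 2 * ∫ ρ in I, ρ * ‖u ρ‖ ^ 2 :=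
    mul_nonneg (by positivity) hRHS0
  set f : ℝ → ℂ := fun r => ∫ ρ in Set.Ioo r 1, ((ρ ^ (1 - d) : ℝ) : ℂ) * u ρ with hf
  set F : ℝ → ℝ := fun r => ‖f r‖ ^ 2 * r ^ (2 * d - 1) with hF
  by_cases hm : AEStronglyMeasurable F (volume.restrict I)
  swap
  · rw [integral_undef (fun hint => hm hint.1)]
    exact hRHS
  -- measurability of |u|^2 and D
  have husq : AEMeasurable (fun ρ => ‖u ρ‖ ^ 2) (volume.restrict I) := by
    have h1 : AEMeasurable (fun ρ => ρ * ‖u ρ‖ ^ 2) (volume.restrict I) :=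
      hu.1.aemeasurable
    have h2 : AEMeasurable (fun ρ => ρ⁻¹ * (ρ * ‖u ρ‖ ^ 2)) (volume.restrict I) :=
      (measurable_inv.comp measurable_id).aemeasurable.mul h1
    apply h2.congr
    rw [Filter.EventuallyEq, ae_restrict_iff' measurableSet_Ioo]
    apply ae_of_all
    intro ρ hρ
    have : ρ ≠ 0 := ne_of_gt hρ.1
    field_simp
  have hΦcont : Continuous Φ :=
    (besselP_continuous (a + 1)).comp (continuous_const.mul continuous_id)
  have hWcont : Continuous W :=
    (besselP_continuous a).comp (continuous_const.mul continuous_id)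
  have hden : Continuous fun ρ : ℝ => ρ ^ (2 * a + 1) * Φ ρ := (continuous_pow _).mul hΦcont
  have hDm : AEMeasurable D (volume.restrict I) := husq.div hden.measurable.aemeasurable
  -- zpow rewrites
  have hzpow1 : ∀ r : ℝ, 0 < r → (r : ℝ) ^ (2 * d - 1) = r ^ (2 * a + 1) := by
    intro r hr; rw [hd2, zpow_natCast]
  have hzpow2 : ∀ ρ : ℝ, 0 < ρ → (ρ : ℝ) ^ (1 - d) = (ρ ^ a)⁻¹ := by
    intro ρ hρ; rw [h1d, zpow_neg, zpow_natCast]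
  -- Claim 1 : pointwise Cauchy-Schwarz bound
  have claim1 : ∀ r ∈ I, ENNReal.ofReal (‖f r‖ ^ 2)
      ≤ ENNReal.ofReal (W r / j ^ 2) * ∫⁻ ρ in Set.Ioo r 1, ENNReal.ofReal (D ρ) := by
    intro r hr
    have hr0 : 0 < r := hr.1
    have hr1 : r < 1 := hr.2
    have hsub : Set.Ioo r 1 ⊆ I := fun x hx => ⟨lt_trans hr0 hx.1, hx.2⟩
    have hres : volume.restrict (Set.Ioo r 1) ≤ volume.restrict I :=
      Measure.restrict_mono hsub le_rfl
    have hDm' : AEMeasurable D (volume.restrict (Set.Ioo r 1)) := hDm.mono_measure hres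
    set g1 : ℝ → ℝ≥0∞ := fun ρ => ENNReal.ofReal (Real.sqrt (ρ * Φ ρ)) with hg1
    set g2 : ℝ → ℝ≥0∞ := fun ρ => ENNReal.ofReal (Real.sqrt (D ρ)) with hg2
    have hg1m : Measurable g1 :=
      ENNReal.measurable_ofReal.comp (Real.continuous_sqrt.measurable.comp
        ((continuous_id.mul hΦcont).measurable))
    have hg2m : AEMeasurable g2 (volume.restrict (Set.Ioo r 1)) :=
      ENNReal.measurable_ofReal.comp_aemeasurable
        (Real.continuous_sqrt.measurable.comp_aemeasurable hDm')
    -- kernel factorization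
    have hker : ∀ ρ ∈ Set.Ioo r 1,
        ENNReal.ofReal ‖((ρ ^ (1 - d) : ℝ) : ℂ) * u ρ‖ = g1 ρ * g2 ρ := by
      intro ρ hρ
      have hρ0 : 0 < ρ := lt_trans hr0 hρ.1
      have hΦρ : 0 < Φ ρ := hΦpos ρ hρ0 (le_of_lt hρ.2)
      rw [hg1, hg2, ← ENNReal.ofReal_mul (Real.sqrt_nonneg _)]
      congr 1
      rw [norm_mul, Complex.norm_real, Real.norm_eq_abs, hzpow2 ρ hρ0,
        abs_of_pos (by positivity), ← Real.sqrt_mul (by positivity)]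
      have hsq : ρ * Φ ρ * D ρ = ((ρ ^ a)⁻¹ * ‖u ρ‖) ^ 2 := by
        simp only [hD]
        have h2 : Φ ρ ≠ 0 := ne_of_gt hΦρ
        have h3 : ρ ≠ 0 := ne_of_gt hρ0
        field_simp
        ring
      rw [hsq, Real.sqrt_sq (by positivity)]
    -- bound |f r| by lintegral
    have h0 : ENNReal.ofReal (‖f r‖)
        ≤ ∫⁻ ρ in Set.Ioo r 1, ENNReal.ofReal ‖((ρ ^ (1 - d) : ℝ) : ℂ) * u ρ‖ := by
      exact ENNReal.ofReal_le_of_le_toReal (norm_integral_le_lintegral_norm _)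
    -- rewrite the lintegral with the factorization
    have hLrw : (∫⁻ ρ in Set.Ioo r 1, ENNReal.ofReal ‖((ρ ^ (1 - d) : ℝ) : ℂ) * u ρ‖)
        = ∫⁻ ρ in Set.Ioo r 1, (g1 * g2) ρ := by
      apply setLIntegral_congr_fun measurableSet_Ioo
      exact fun ρ hρ => hker ρ hρ
    -- Hölder
    have hconj : Real.HolderConjugate 2 2 := Real.holderConjugate_iff.2 ⟨one_lt_two, by norm_num⟩
    have hHold := ENNReal.lintegral_mul_le_Lp_mul_Lq (volume.restrict (Set.Ioo r 1)) hconj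
      hg1m.aemeasurable hg2m
    -- compute ∫⁻ g1^2
    have hint1 : IntegrableOn (fun ρ : ℝ => ρ * Φ ρ) (Set.Ioo r 1) :=
      ((continuous_id.mul hΦcont).integrableOn_Icc).mono_set Set.Ioo_subset_Icc_self
    have hA : (∫⁻ ρ in Set.Ioo r 1, g1 ρ ^ (2:ℝ)) = ENNReal.ofReal (W r / j ^ 2) := by
      have e1 : ∀ ρ ∈ Set.Ioo r 1, g1 ρ ^ (2:ℝ) = ENNReal.ofReal (ρ * Φ ρ) := by
        intro ρ hρ
        have hρ0 : 0 < ρ := lt_trans hr0 hρ.1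
        have hΦρ : 0 < Φ ρ := hΦpos ρ hρ0 (le_of_lt hρ.2)
        rw [hg1, ENNReal.ofReal_rpow_of_nonneg (Real.sqrt_nonneg _) (by norm_num)]
        congr 1
        rw [show ((2:ℝ)) = ((2:ℕ):ℝ) by norm_num, Real.rpow_natCast, Real.sq_sqrt (by positivity)]
      rw [setLIntegral_congr_fun measurableSet_Ioo e1,
        ← ofReal_integral_eq_lintegral_ofReal hint1
          ((ae_restrict_iff' measurableSet_Ioo).2 (ae_of_all _ fun ρ hρ =>
            le_of_lt (mul_pos (lt_trans hr0 hρ.1) (hΦpos ρ (lt_trans hr0 hρ.1) (le_of_lt hρ.2))))),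
        integ1 a j hj0 hjz r hr0 (le_of_lt hr1)]
    calc ENNReal.ofReal (‖f r‖ ^ 2)
        = ENNReal.ofReal (‖f r‖) ^ (2:ℝ) := by
          rw [ENNReal.ofReal_rpow_of_nonneg (norm_nonneg _) (by norm_num : (0:ℝ) ≤ 2)]
          congr 1
          rw [show ((2:ℝ)) = ((2:ℕ):ℝ) by norm_num, Real.rpow_natCast]
      _ ≤ (∫⁻ ρ in Set.Ioo r 1, (g1 * g2) ρ) ^ (2:ℝ) :=
          ENNReal.rpow_le_rpow (hLrw ▸ h0) (by norm_num)
      _ ≤ ((∫⁻ ρ in Set.Ioo r 1, g1 ρ ^ (2:ℝ)) ^ (1/(2:ℝ))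
            * (∫⁻ ρ in Set.Ioo r 1, g2 ρ ^ (2:ℝ)) ^ (1/(2:ℝ))) ^ (2:ℝ) :=
          ENNReal.rpow_le_rpow hHold (by norm_num)
      _ = (∫⁻ ρ in Set.Ioo r 1, g1 ρ ^ (2:ℝ)) * (∫⁻ ρ in Set.Ioo r 1, g2 ρ ^ (2:ℝ)) := by
          rw [ENNReal.mul_rpow_of_nonneg _ _ (by norm_num : (0:ℝ) ≤ 2), ← ENNReal.rpow_mul,
            ← ENNReal.rpow_mul]
          norm_num
      _ = ENNReal.ofReal (W r / j ^ 2) * ∫⁻ ρ in Set.Ioo r 1, ENNReal.ofReal (D ρ) := by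
          rw [hA]
          congr 1
          apply setLIntegral_congr_fun measurableSet_Ioo
          intro ρ hρ
          beta_reduce
          have hρ0 : 0 < ρ := lt_trans hr0 hρ.1
          have hΦρ : 0 < Φ ρ := hΦpos ρ hρ0 (le_of_lt hρ.2)
          have hDnn : 0 ≤ D ρ := div_nonneg (sq_nonneg _) (by positivity)
          rw [hg2, ENNReal.ofReal_rpow_of_nonneg (Real.sqrt_nonneg _) (by norm_num : (0:ℝ) ≤ 2)]
          congr 1
          rw [show ((2:ℝ)) = ((2:ℕ):ℝ) by norm_num, Real.rpow_natCast, Real.sq_sqrt hDnn]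
  -- main chain
  have hFnn : 0 ≤ᵐ[volume.restrict I] F := by
    rw [Filter.EventuallyLE, ae_restrict_iff' measurableSet_Ioo]
    apply ae_of_all
    intro r hr
    exact mul_nonneg (sq_nonneg _) (le_of_lt (zpow_pos hr.1 _))
  rw [integral_eq_lintegral_of_nonneg_ae hFnn hm]
  apply ENNReal.toReal_le_of_le_ofReal hRHS
  set K : ℝ → ℝ≥0∞ := fun r => ENNReal.ofReal (r ^ (2*a+1) * (W r / j^2)) with hK
  have hKm : Measurable K :=
    ENNReal.measurable_ofReal.comp ((continuous_pow _).mul (hWcont.div_const _)).measurable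
  have hDall : AEMeasurable (fun ρ => ENNReal.ofReal (D ρ)) (volume.restrict I) :=
    ENNReal.measurable_ofReal.comp_aemeasurable hDm
  have hswap : AEMeasurable (Function.uncurry fun r ρ =>
      K r * (Set.Ioi r).indicator (fun ρ' => ENNReal.ofReal (D ρ')) ρ)
      ((volume.restrict I).prod (volume.restrict I)) := by
    have h1 : AEMeasurable (fun p : ℝ × ℝ => K p.1)
        ((volume.restrict I).prod (volume.restrict I)) := (hKm.comp measurable_fst).aemeasurable
    have h2 : AEMeasurable (fun p : ℝ × ℝ => ENNReal.ofReal (D p.2))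
        ((volume.restrict I).prod (volume.restrict I)) := hDall.comp_snd
    have h3 : Measurable (fun p : ℝ × ℝ =>
        ({q : ℝ × ℝ | q.1 < q.2}.indicator (fun _ => (1:ℝ≥0∞)) p)) :=
      measurable_one.indicator (measurableSet_lt measurable_fst measurable_snd)
    have heq : (Function.uncurry fun r ρ =>
        K r * (Set.Ioi r).indicator (fun ρ' => ENNReal.ofReal (D ρ')) ρ)
        = fun p : ℝ × ℝ => (K p.1 * ENNReal.ofReal (D p.2))
            * ({q : ℝ × ℝ | q.1 < q.2}.indicator (fun _ => (1:ℝ≥0∞)) p) := by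
      funext p
      rcases p with ⟨r, ρ⟩
      by_cases h : r < ρ <;>
        simp [Function.uncurry, Set.indicator_apply, Set.mem_Ioi, h]
    rw [heq]
    exact (h1.mul h2).mul h3.aemeasurable
  calc ∫⁻ r in I, ENNReal.ofReal (F r)
      ≤ ∫⁻ r in I, K r * ∫⁻ ρ in Set.Ioo r 1, ENNReal.ofReal (D ρ) := by
        apply lintegral_mono_ae
        rw [ae_restrict_iff' measurableSet_Ioo]
        apply ae_of_all
        intro r hr
        calc ENNReal.ofReal (F r)
            = ENNReal.ofReal (‖f r‖ ^ 2) * ENNReal.ofReal (r ^ (2*a+1)) := by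
              simp only [hF]
              rw [hzpow1 r hr.1, ENNReal.ofReal_mul (sq_nonneg _)]
          _ ≤ (ENNReal.ofReal (W r / j ^ 2) * ∫⁻ ρ in Set.Ioo r 1, ENNReal.ofReal (D ρ))
                * ENNReal.ofReal (r ^ (2*a+1)) := mul_le_mul_left (claim1 r hr) _
          _ = K r * ∫⁻ ρ in Set.Ioo r 1, ENNReal.ofReal (D ρ) := by
              simp only [hK]
              rw [ENNReal.ofReal_mul (pow_nonneg (le_of_lt hr.1) _)]
              ring
    _ = ∫⁻ r in I, ∫⁻ ρ in I,
          K r * (Set.Ioi r).indicator (fun ρ' => ENNReal.ofReal (D ρ')) ρ := by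
        apply setLIntegral_congr_fun measurableSet_Ioo
        intro r hr
        beta_reduce
        rw [lintegral_const_mul' _ _ ENNReal.ofReal_ne_top]
        congr 1
        rw [lintegral_indicator measurableSet_Ioi, Measure.restrict_restrict measurableSet_Ioi]
        have hset : Set.Ioi r ∩ I = Set.Ioo r 1 := by
          rw [Set.inter_comm, Set.Ioo_inter_Ioi, max_eq_right (le_of_lt hr.1)]
        rw [hset]
    _ = ∫⁻ ρ in I, ∫⁻ r in I,
          K r * (Set.Ioi r).indicator (fun ρ' => ENNReal.ofReal (D ρ')) ρ :=
        lintegral_lintegral_swap hswap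
    _ = ∫⁻ ρ in I, ENNReal.ofReal (1 / j ^ 2 * (ρ * ‖u ρ‖ ^ 2)) := by
        apply setLIntegral_congr_fun measurableSet_Ioo
        intro ρ hρ
        beta_reduce
        have hρ0 : 0 < ρ := hρ.1
        have hρ1 : ρ < 1 := hρ.2
        have hΦρ : 0 < Φ ρ := hΦpos ρ hρ0 (le_of_lt hρ1)
        have hfun : ∀ r : ℝ, K r * (Set.Ioi r).indicator (fun ρ' => ENNReal.ofReal (D ρ')) ρ
            = (Set.Iio ρ).indicator K r * ENNReal.ofReal (D ρ) := by
          intro r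
          by_cases h : r < ρ <;>
            simp [Set.indicator_apply, Set.mem_Ioi, Set.mem_Iio, h]
        rw [lintegral_congr hfun, lintegral_mul_const' _ _ ENNReal.ofReal_ne_top,
          lintegral_indicator measurableSet_Iio, Measure.restrict_restrict measurableSet_Iio]
        have hset : Set.Iio ρ ∩ I = Set.Ioo 0 ρ := by
          rw [Set.inter_comm, Set.Ioo_inter_Iio, min_eq_right (le_of_lt hρ1)]
        rw [hset]
        -- compute ∫⁻ K over Ioo 0 ρ
        have hint2 : IntegrableOn (fun r : ℝ => r ^ (2*a+1) * (W r / j^2)) (Set.Ioo 0 ρ) :=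
          (((continuous_pow _).mul (hWcont.div_const _)).integrableOn_Icc).mono_set
            Set.Ioo_subset_Icc_self
        have hKval : (∫⁻ r in Set.Ioo 0 ρ, K r)
            = ENNReal.ofReal (ρ ^ (2*a+2) * Φ ρ / j^2) := by
          rw [hK, ← ofReal_integral_eq_lintegral_ofReal hint2
            ((ae_restrict_iff' measurableSet_Ioo).2 (ae_of_all _ fun r hr => by
              have hWr : 0 < W r := hWpos r hr.1 (lt_trans hr.2 hρ1)
              have : (0:ℝ) < r ^ (2*a+1) := pow_pos hr.1 _
              positivity))]
          congr 1
          have : (fun r : ℝ => r ^ (2*a+1) * (W r / j^2))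
              = fun r : ℝ => (r ^ (2*a+1) * W r) / j^2 := by
            funext r; ring
          rw [this, integral_div, integ2 a j hj0 ρ (le_of_lt hρ0)]
        rw [hKval, ← ENNReal.ofReal_mul (by positivity)]
        congr 1
        simp only [hD]
        have hρne : ρ ≠ 0 := ne_of_gt hρ0
        have hΦne : Φ ρ ≠ 0 := ne_of_gt hΦρ
        have hjne : j ≠ 0 := ne_of_gt hj0
        field_simp
        ring
    _ = ENNReal.ofReal (1 / j ^ 2 * ∫ ρ in I, ρ * ‖u ρ‖ ^ 2) := by
        have e2 : ∀ ρ ∈ I, ENNReal.ofReal (1 / j ^ 2 * (ρ * ‖u ρ‖ ^ 2))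
            = ENNReal.ofReal (1 / j ^ 2) * ENNReal.ofReal (ρ * ‖u ρ‖ ^ 2) :=
          fun ρ hρ => ENNReal.ofReal_mul (by positivity)
        rw [setLIntegral_congr_fun measurableSet_Ioo e2,
          lintegral_const_mul' _ _ ENNReal.ofReal_ne_top,
          ← ofReal_integral_eq_lintegral_ofReal hu
            ((ae_restrict_iff' measurableSet_Ioo).2 (ae_of_all _ fun ρ hρ =>
              mul_nonneg (le_of_lt hρ.1) (sq_nonneg _))),
          ← ENNReal.ofReal_mul (by positivity)]
end

section
/- Let d > 1 be an integer and (b_n)_{n≥0} complex numbers with finitely many nonzero. Define on the unit disk h(z) = Σ_{n≥0} b_n ( ((n+d)/(n+1)) z^{n+d−1} \bar{z}^{n+1} − ((d−1)/(n+1)) z^{d−2} ). Then ∫_{\mathbb{D}} |h(z)|² dA(z) = Σ_{n,l ≥ 0} b_n \bar{b}_l/(n + l + d + 1). -/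
open MeasureTheory Metric
open Set

lemma diag_int (a : ℕ) :
    (∫ z in ball (0 : ℂ) 1, z ^ a * (starRingEnd ℂ z) ^ a) = (Real.pi : ℂ) / (a + 1) := by
  have h1 : (∫ z in ball (0 : ℂ) 1, z ^ a * (starRingEnd ℂ z) ^ a)
      = ∫ z, (ball (0:ℂ) 1).indicator (fun z => z ^ a * (starRingEnd ℂ z) ^ a) z := by
    rw [integral_indicator measurableSet_ball]
  rw [h1, ← Complex.integral_comp_polarCoord_symm]
  have h2 : ∀ p ∈ polarCoord.target,
      p.1 • (ball (0:ℂ) 1).indicator (fun z => z ^ a * (starRingEnd ℂ z) ^ a)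
        (Complex.polarCoord.symm p)
      = (Iio (1:ℝ)).indicator (fun r => (r:ℂ) ^ (2*a+1)) p.1 * (1:ℂ) := by
    rintro ⟨r, θ⟩ hp
    rw [polarCoord_target] at hp
    obtain ⟨hr, hθ⟩ := hp
    simp only [mem_Ioi] at hr
    have habs : ‖Complex.polarCoord.symm (r, θ)‖ = r := by
      rw [Complex.norm_polarCoord_symm]; exact abs_of_pos hr
    by_cases hlt : r < 1
    · have hmem : Complex.polarCoord.symm (r, θ) ∈ ball (0:ℂ) 1 := by
        simp [mem_ball, Complex.dist_eq, habs, abs_of_pos hr, hlt]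
      rw [indicator_of_mem hmem, indicator_of_mem (by exact hlt : r ∈ Iio 1)]
      have : (Complex.polarCoord.symm (r, θ)) ^ a *
          (starRingEnd ℂ (Complex.polarCoord.symm (r, θ))) ^ a
          = ((r:ℂ)^2) ^ a := by
        rw [← mul_pow, Complex.mul_conj]
        congr 1
        rw [Complex.normSq_eq_norm_sq, habs]
        push_cast; ring
      rw [this, Complex.real_smul]
      ring
    · have hmem : Complex.polarCoord.symm (r, θ) ∉ ball (0:ℂ) 1 := by
        simp [mem_ball, Complex.dist_eq, habs, abs_of_pos hr, hlt]
      rw [indicator_of_notMem hmem, indicator_of_notMem (by simpa using hlt)]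
      simp
  rw [setIntegral_congr_fun (polarCoord.open_target.measurableSet) h2]
  rw [polarCoord_target, Measure.volume_eq_prod, setIntegral_prod_mul (fun r => (Iio (1:ℝ)).indicator (fun r => (r:ℂ) ^ (2*a+1)) r) (fun _ => (1:ℂ))]
  have hrad : (∫ r in Ioi (0:ℝ), (Iio (1:ℝ)).indicator (fun r => (r:ℂ) ^ (2*a+1)) r)
      = ((2*a+2 : ℝ))⁻¹ := by
    rw [setIntegral_indicator measurableSet_Iio]
    have : Ioi (0:ℝ) ∩ Iio 1 = Ioo 0 1 := by ext x; simp [mem_Ioo, and_comm]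
    rw [this]
    have : (∫ r in Ioo (0:ℝ) 1, ((r:ℂ) ^ (2*a+1)))
        = ((∫ r in Ioo (0:ℝ) 1, r ^ (2*a+1) : ℝ) : ℂ) := by
      rw [show (fun r : ℝ => ((r:ℂ) ^ (2*a+1))) = fun r : ℝ => (((r ^ (2*a+1) : ℝ)) : ℂ) by
        funext r; push_cast; ring]
      exact integral_ofReal
    rw [this, ← integral_Ioc_eq_integral_Ioo, ← intervalIntegral.integral_of_le zero_le_one,
      integral_pow]
    push_cast; ring_nf
  have hang : (∫ _ in Ioo (-Real.pi) Real.pi, (1:ℂ)) = ((2*Real.pi : ℝ) : ℂ) := by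
    rw [setIntegral_const, Real.volume_real_Ioo_of_le (by linarith [Real.pi_pos]),
      Complex.real_smul]
    push_cast; ring
  rw [hrad, hang]
  have ha : ((a:ℂ) + 1) ≠ 0 := by
    have := Nat.cast_add_one_ne_zero (R := ℂ) a; exact_mod_cast this
  have h2a : ((2:ℂ) * a + 2) ≠ 0 := by
    have : ((2:ℂ) * a + 2) = 2 * ((a:ℂ) + 1) := by ring
    rw [this]; exact mul_ne_zero two_ne_zero ha
  push_cast
  field_simp



lemma cont_intOn {f : ℂ → ℂ} (hf : Continuous f) : IntegrableOn f (ball (0:ℂ) 1) volume :=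
  (hf.continuousOn.integrableOn_compact (isCompact_closedBall 0 1)).mono_set
    ball_subset_closedBall

lemma intg (a : ℕ) (c : ℂ) :
    IntegrableOn (fun z : ℂ => c * (z ^ a * (starRingEnd ℂ z) ^ a)) (ball (0:ℂ) 1) volume := by
  apply cont_intOn
  exact continuous_const.mul ((continuous_pow a).mul (Complex.continuous_conj.pow a))

set_option maxHeartbeats 1000000 in
lemma alg (N L E P : ℂ) (h1 : N+1≠0) (h2 : L+1≠0) (h3 : E+1≠0) (h4 : N+E+2≠0)
    (h5 : L+E+2≠0) (h6 : N+L+E+3≠0) :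
    ((N+(E+2))/(N+1)) * ((L+(E+2))/(L+1)) * (P/(N+L+E+3))
    - ((N+(E+2))/(N+1)) * (((E+2)-1)/(L+1)) * (P/(N+E+2))
    - (((E+2)-1)/(N+1)) * ((L+(E+2))/(L+1)) * (P/(L+E+2))
    + (((E+2)-1)/(N+1)) * (((E+2)-1)/(L+1)) * (P/(E+1))
    = P/(N+L+E+3) := by
  have e2 : ((N+(E+2))/(N+1)) * (((E+2)-1)/(L+1)) * (P/(N+E+2))
      = (E+1)*P/((N+1)*(L+1)) := by
    rw [div_mul_div_comm, div_mul_div_comm]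
    rw [show (N+(E+2))*((E+2)-1)*P = ((E+1)*P)*(N+E+2) by ring,
      show (N+1)*(L+1)*(N+E+2) = ((N+1)*(L+1))*(N+E+2) by ring]
    exact mul_div_mul_right _ _ h4
  have e3 : (((E+2)-1)/(N+1)) * ((L+(E+2))/(L+1)) * (P/(L+E+2))
      = (E+1)*P/((N+1)*(L+1)) := by
    rw [div_mul_div_comm, div_mul_div_comm]
    rw [show ((E+2)-1)*(L+(E+2))*P = ((E+1)*P)*(L+E+2) by ring,
      show (N+1)*(L+1)*(L+E+2) = ((N+1)*(L+1))*(L+E+2) by ring]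
    exact mul_div_mul_right _ _ h5
  have e4 : (((E+2)-1)/(N+1)) * (((E+2)-1)/(L+1)) * (P/(E+1))
      = (E+1)*P/((N+1)*(L+1)) := by
    rw [div_mul_div_comm, div_mul_div_comm]
    rw [show ((E+2)-1)*((E+2)-1)*P = ((E+1)*P)*(E+1) by ring,
      show (N+1)*(L+1)*(E+1) = ((N+1)*(L+1))*(E+1) by ring]
    exact mul_div_mul_right _ _ h3
  rw [e2, e3, e4]
  have hNL : (N+1)*(L+1) ≠ 0 := mul_ne_zero h1 h2
  rw [div_mul_div_comm, div_mul_div_comm]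
  rw [div_sub_div _ _ (mul_ne_zero (mul_ne_zero h1 h2) h6) hNL]
  rw [sub_add_cancel]
  rw [div_eq_div_iff (mul_ne_zero (mul_ne_zero hNL h6) hNL) h6]
  ring


set_option maxHeartbeats 1000000 in
lemma prod_int (d n l : ℕ) (hd : 1 < d) :
    (∫ z in ball (0:ℂ) 1,
      ((((n : ℂ) + d) / (n + 1)) * z ^ (n + d - 1) * (starRingEnd ℂ z) ^ (n + 1)
          - (((d : ℂ) - 1) / (n + 1)) * z ^ (d - 2)) *
      starRingEnd ℂ ((((l : ℂ) + d) / (l + 1)) * z ^ (l + d - 1) * (starRingEnd ℂ z) ^ (l + 1)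
          - (((d : ℂ) - 1) / (l + 1)) * z ^ (d - 2)))
     = (Real.pi : ℂ) / ((n:ℂ) + l + d + 1) := by
  obtain ⟨e, rfl⟩ : ∃ e, d = e + 2 := ⟨d - 2, by omega⟩
  push_cast
  set cn : ℂ := ((n : ℂ) + (e+2)) / (n + 1) with hcn
  set cl : ℂ := ((l : ℂ) + (e+2)) / (l + 1) with hcl
  set en : ℂ := (((e:ℂ)+2) - 1) / (n + 1) with hen
  set el : ℂ := (((e:ℂ)+2) - 1) / (l + 1) with hel
  have c1 : starRingEnd ℂ cl = cl := by
    rw [hcl]; simp [map_div₀, Complex.conj_ofNat]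
  have c2 : starRingEnd ℂ el = el := by
    rw [hel]; simp [map_div₀, Complex.conj_ofNat]
  have key : ∀ z ∈ ball (0:ℂ) 1,
      (cn * z ^ (n + (e+2) - 1) * (starRingEnd ℂ z) ^ (n + 1)
          - en * z ^ e) *
      starRingEnd ℂ (cl * z ^ (l + (e+2) - 1) * (starRingEnd ℂ z) ^ (l + 1)
          - el * z ^ e)
      = (cn * cl) * (z ^ (n+l+e+2) * (starRingEnd ℂ z) ^ (n+l+e+2))
        - (cn * el) * (z ^ (n+e+1) * (starRingEnd ℂ z) ^ (n+e+1))
        - (en * cl) * (z ^ (l+e+1) * (starRingEnd ℂ z) ^ (l+e+1))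
        + (en * el) * (z ^ e * (starRingEnd ℂ z) ^ e) := by
    intro z _
    simp only [map_sub, map_mul, map_pow, Complex.conj_conj, c1, c2]
    have h1 : n + (e+2) - 1 = n + e + 1 := by omega
    have h2 : l + (e+2) - 1 = l + e + 1 := by omega
    rw [h1, h2]
    ring
  rw [setIntegral_congr_fun measurableSet_ball key]
  have I1 := intg (n+l+e+2) (cn*cl)
  have I2 := intg (n+e+1) (cn*el)
  have I3 := intg (l+e+1) (en*cl)
  have I4 := intg e (en*el)
  have I12 : IntegrableOn (fun z : ℂ => cn * cl * (z ^ (n+l+e+2) * (starRingEnd ℂ z) ^ (n+l+e+2))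
      - cn * el * (z ^ (n+e+1) * (starRingEnd ℂ z) ^ (n+e+1))) (ball (0:ℂ) 1) volume := I1.sub I2
  have I123 : IntegrableOn (fun z : ℂ => cn * cl * (z ^ (n+l+e+2) * (starRingEnd ℂ z) ^ (n+l+e+2))
      - cn * el * (z ^ (n+e+1) * (starRingEnd ℂ z) ^ (n+e+1))
      - en * cl * (z ^ (l+e+1) * (starRingEnd ℂ z) ^ (l+e+1))) (ball (0:ℂ) 1) volume := I12.sub I3
  rw [integral_add I123 I4, integral_sub I12 I3, integral_sub I1 I2,
    integral_const_mul, integral_const_mul, integral_const_mul, integral_const_mul,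
    diag_int, diag_int, diag_int, diag_int]
  have h1 : ((n:ℂ) + 1) ≠ 0 := Nat.cast_add_one_ne_zero n
  have h2 : ((l:ℂ) + 1) ≠ 0 := Nat.cast_add_one_ne_zero l
  have h3 : ((e:ℂ) + 1) ≠ 0 := Nat.cast_add_one_ne_zero e
  have h4 : ((n:ℂ) + e + 2) ≠ 0 := by
    have : ((n:ℂ) + e + 2) = ((n+e+1 : ℕ):ℂ) + 1 := by push_cast; ring
    rw [this]; exact Nat.cast_add_one_ne_zero _
  have h5 : ((l:ℂ) + e + 2) ≠ 0 := by
    have : ((l:ℂ) + e + 2) = ((l+e+1 : ℕ):ℂ) + 1 := by push_cast; ring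
    rw [this]; exact Nat.cast_add_one_ne_zero _
  have h6 : ((n:ℂ) + l + e + 3) ≠ 0 := by
    have : ((n:ℂ) + l + e + 3) = ((n+l+e+2 : ℕ):ℂ) + 1 := by push_cast; ring
    rw [this]; exact Nat.cast_add_one_ne_zero _
  rw [hcn, hcl, hen, hel]
  push_cast
  linear_combination alg (n:ℂ) (l:ℂ) (e:ℂ) (Real.pi:ℂ) h1 h2 h3 h4 h5 h6


theorem stmt_17 (d : ℕ) (hd : 1 < d) (b : ℕ → ℂ) (hb : (Function.support b).Finite)
    (h : ℂ → ℂ)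
    (hh : ∀ z : ℂ, h z = ∑' n : ℕ,
      b n * (((n + d : ℂ) / (n + 1)) * z ^ (n + d - 1) * (starRingEnd ℂ z) ^ (n + 1)
        - ((d - 1 : ℂ) / (n + 1)) * z ^ (d - 2))) :
    ((Real.pi : ℂ))⁻¹ * (∫ z in ball (0 : ℂ) 1, ((‖h z‖ : ℝ) : ℂ) ^ 2)
      = ∑' n : ℕ, ∑' l : ℕ, b n * starRingEnd ℂ (b l) / ((n : ℂ) + l + d + 1) := by
  classical
  set S := hb.toFinset with hS
  set T : ℕ → ℂ → ℂ := fun n z =>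
    ((n + d : ℂ) / (n + 1)) * z ^ (n + d - 1) * (starRingEnd ℂ z) ^ (n + 1)
      - ((d - 1 : ℂ) / (n + 1)) * z ^ (d - 2) with hT
  have hTcont : ∀ n, Continuous (T n) := by
    intro n
    exact ((continuous_const.mul (continuous_pow _)).mul
      (Complex.continuous_conj.pow _)).sub (continuous_const.mul (continuous_pow _))
  have hbz : ∀ n ∉ S, b n = 0 := by
    intro n hn
    by_contra hne
    exact hn (hb.mem_toFinset.mpr hne)
  have hsum : ∀ z, h z = ∑ n ∈ S, b n * T n z := by
    intro z
    rw [hh z]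
    exact tsum_eq_sum (fun n hn => by rw [hbz n hn, zero_mul])
  have hptwise : ∀ z, ((‖h z‖ : ℝ) : ℂ) ^ 2
      = ∑ n ∈ S, ∑ l ∈ S, (b n * starRingEnd ℂ (b l)) * (T n z * starRingEnd ℂ (T l z)) := by
    intro z
    have e1 : ((‖h z‖ : ℝ) : ℂ) ^ 2 = h z * starRingEnd ℂ (h z) := by
      rw [Complex.mul_conj, ← Complex.sq_norm]
      push_cast
      ring
    rw [e1, hsum z, map_sum, Finset.sum_mul_sum]
    refine Finset.sum_congr rfl fun n _ => Finset.sum_congr rfl fun l _ => ?_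
    rw [map_mul]
    ring
  have hint : ∀ n l : ℕ, IntegrableOn
      (fun z => (b n * starRingEnd ℂ (b l)) * (T n z * starRingEnd ℂ (T l z)))
      (ball (0:ℂ) 1) volume := by
    intro n l
    exact cont_intOn (continuous_const.mul
      ((hTcont n).mul (Complex.continuous_conj.comp (hTcont l))))
  have hI : (∫ z in ball (0:ℂ) 1, ((‖h z‖ : ℝ) : ℂ) ^ 2)
      = ∑ n ∈ S, ∑ l ∈ S,
        (b n * starRingEnd ℂ (b l)) * ((Real.pi : ℂ) / ((n:ℂ) + l + d + 1)) := by
    rw [setIntegral_congr_fun measurableSet_ball (fun z _ => hptwise z)]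
    rw [integral_finset_sum S (fun n _ => integrable_finset_sum S (fun l _ => hint n l))]
    refine Finset.sum_congr rfl fun n _ => ?_
    rw [integral_finset_sum S (fun l _ => hint n l)]
    refine Finset.sum_congr rfl fun l _ => ?_
    rw [integral_const_mul, prod_int d n l hd]
  have hRHS : (∑' n : ℕ, ∑' l : ℕ, b n * starRingEnd ℂ (b l) / ((n : ℂ) + l + d + 1))
      = ∑ n ∈ S, ∑ l ∈ S, b n * starRingEnd ℂ (b l) / ((n : ℂ) + l + d + 1) := by
    have inner : ∀ n : ℕ, (∑' l : ℕ, b n * starRingEnd ℂ (b l) / ((n : ℂ) + l + d + 1))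
        = ∑ l ∈ S, b n * starRingEnd ℂ (b l) / ((n : ℂ) + l + d + 1) := by
      intro n
      exact tsum_eq_sum (fun l hl => by rw [hbz l hl, map_zero, mul_zero, zero_div])
    calc (∑' n : ℕ, ∑' l : ℕ, b n * starRingEnd ℂ (b l) / ((n : ℂ) + l + d + 1))
        = ∑' n : ℕ, ∑ l ∈ S, b n * starRingEnd ℂ (b l) / ((n : ℂ) + l + d + 1) := by
          exact tsum_congr inner
      _ = ∑ n ∈ S, ∑ l ∈ S, b n * starRingEnd ℂ (b l) / ((n : ℂ) + l + d + 1) := by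
          refine tsum_eq_sum (fun n hn => ?_)
          refine Finset.sum_eq_zero fun l _ => ?_
          rw [hbz n hn, zero_mul, zero_div]
  rw [hI, hRHS]
  have hπ : (Real.pi : ℂ) ≠ 0 := Complex.ofReal_ne_zero.mpr Real.pi_ne_zero
  rw [Finset.mul_sum]
  refine Finset.sum_congr rfl fun n _ => ?_
  rw [Finset.mul_sum]
  refine Finset.sum_congr rfl fun l _ => ?_
  rw [div_eq_mul_inv, div_eq_mul_inv]
  field_simp
end

section
/- Let d < 1 be an integer and (b_n)_{n ≥ −d} complex numbers with finitely many nonzero. Define on the unit disk h(z) = Σ_{n≥−d} ( ((n+d)/(n+1)) b_n z^{n+d−1} \bar{z}^{n+1} − ((1−d)/(n+1)) \bar{b}_n z^{−d} ), where z^{n+d−1}\bar{z}^{n+1} is interpreted as \bar{z}^{−d+2} |z|^{2(n+d−1)} when n+d−1 < 0. Then ∫_{\mathbb{D}} |h(z)|² dA(z) = Σ_{n,l ≥ −d} b_n \bar{b}_l/(n + l + d + 1). -/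
open MeasureTheory Metric

lemma ang (k : ℤ) : ∫ θ in Set.Ioo (-Real.pi) Real.pi, Complex.exp ((k:ℂ) * θ * Complex.I)
    = if k = 0 then 2*Real.pi else 0 := by
  rw [← MeasureTheory.integral_Ioc_eq_integral_Ioo,
    ← intervalIntegral.integral_of_le (by linarith [Real.pi_pos] : -Real.pi ≤ Real.pi)]
  by_cases hk : k = 0
  · simp [hk, two_mul]
  · simp only [hk, if_false]
    have hc : (k:ℂ) * Complex.I ≠ 0 := by
      simp [Complex.I_ne_zero, Complex.ext_iff, hk]
    have := integral_exp_mul_complex (a := -Real.pi) (b := Real.pi) hc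
    simp only [show ∀ θ:ℝ, (k:ℂ) * θ * Complex.I = (k * Complex.I) * θ by intro θ; ring]
    rw [this]
    have h1 : Complex.exp ((k:ℂ) * Complex.I * (Real.pi:ℝ)) = Complex.cos (k * Real.pi) := by
      rw [show (k:ℂ) * Complex.I * (Real.pi:ℝ) = ((k:ℂ) * Real.pi) * Complex.I by ring,
        Complex.exp_mul_I, Complex.sin_int_mul_pi]
      simp
    have h2 : Complex.exp ((k:ℂ) * Complex.I * ((-Real.pi:ℝ):ℂ)) = Complex.cos (k * Real.pi) := by
      rw [show (k:ℂ) * Complex.I * ((-Real.pi:ℝ):ℂ) = (-((k:ℂ) * Real.pi)) * Complex.I by push_cast; ring,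
        Complex.exp_mul_I, Complex.cos_neg, Complex.sin_neg, Complex.sin_int_mul_pi]
      simp
    rw [h1]
    rw [show ((-Real.pi:ℝ):ℂ) = ((-Real.pi:ℝ):ℂ) from rfl] at h2
    rw [h2]
    simp

lemma rad (k : ℕ) : ∫ r in Set.Ioo (0:ℝ) 1, ((r:ℂ))^k = 1/((k:ℂ)+1) := by
  rw [← MeasureTheory.integral_Ioc_eq_integral_Ioo,
    ← intervalIntegral.integral_of_le (by norm_num : (0:ℝ) ≤ 1)]
  have : ∀ r : ℝ, ((r:ℂ))^k = ((r^k : ℝ) : ℂ) := by intro r; push_cast; ring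
  simp only [this]
  rw [intervalIntegral.integral_ofReal, integral_pow]
  push_cast
  norm_num

lemma monint (a b : ℕ) : ∫ z in ball (0:ℂ) 1, z^a * (starRingEnd ℂ z)^b
    = if a = b then (Real.pi:ℂ)/((a:ℂ)+1) else 0 := by
  set g : ℂ → ℂ := fun z => z^a * (starRingEnd ℂ z)^b with hg
  have h1 : ∫ z in ball (0:ℂ) 1, g z = ∫ z, Set.indicator (ball (0:ℂ) 1) g z := by
    rw [MeasureTheory.integral_indicator measurableSet_ball]
  rw [h1, ← Complex.integral_comp_polarCoord_symm]
  have htarget : polarCoord.target = Set.Ioi (0:ℝ) ×ˢ Set.Ioo (-Real.pi) Real.pi := rfl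
  rw [htarget]
  have key : ∀ p ∈ Set.Ioi (0:ℝ) ×ˢ Set.Ioo (-Real.pi) Real.pi,
      p.1 • Set.indicator (ball (0:ℂ) 1) g (Complex.polarCoord.symm p)
      = (Set.indicator (Set.Ioo (0:ℝ) 1) (fun r => ((r:ℂ))^(a+b+1)) p.1)
        * Complex.exp ((((a:ℤ) - b : ℤ):ℂ) * p.2 * Complex.I) := by
    rintro ⟨r, θ⟩ ⟨hr, hθ⟩
    simp only [Set.mem_Ioi] at hr
    have hsymm : Complex.polarCoord.symm (r, θ) = (r:ℂ) * Complex.exp (θ * Complex.I) := by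
      rw [Complex.polarCoord_symm_apply, Complex.exp_mul_I]
      push_cast
      ring
    have habs : ‖Complex.polarCoord.symm (r, θ)‖ = r := by
      rw [Complex.norm_polarCoord_symm]; exact abs_of_pos hr
    have hmem : Complex.polarCoord.symm (r, θ) ∈ ball (0:ℂ) 1 ↔ r < 1 := by
      rw [mem_ball_zero_iff, habs]
    by_cases hr1 : r < 1
    · rw [Set.indicator_of_mem (hmem.mpr hr1),
        Set.indicator_of_mem (by exact ⟨hr, hr1⟩)]
      simp only [hg, hsymm]
      rw [Complex.real_smul]
      have hconj : (starRingEnd ℂ) ((r:ℂ) * Complex.exp (θ * Complex.I))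
          = (r:ℂ) * Complex.exp (-(θ * Complex.I)) := by
        rw [map_mul, Complex.conj_ofReal, ← Complex.exp_conj]
        congr 2
        simp [Complex.ext_iff]
      rw [hconj, mul_pow, mul_pow, ← Complex.exp_nat_mul, ← Complex.exp_nat_mul]
      rw [show (r:ℂ) * ((r:ℂ)^a * Complex.exp (a * (θ * Complex.I)) *
          ((r:ℂ)^b * Complex.exp (b * -(θ * Complex.I))))
        = (r:ℂ)^(a+b+1) * (Complex.exp (a * (θ * Complex.I)) * Complex.exp (b * -(θ * Complex.I))) by
          rw [pow_add, pow_add]; ring]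
      rw [← Complex.exp_add]
      congr 2
      push_cast
      ring
    · rw [Set.indicator_of_notMem (fun hc => hr1 (hmem.mp hc)),
        Set.indicator_of_notMem (by simp [Set.mem_Ioo, hr1])]
      simp
  rw [MeasureTheory.setIntegral_congr_fun (measurableSet_Ioi.prod measurableSet_Ioo) key]
  rw [Measure.volume_eq_prod]
  rw [MeasureTheory.setIntegral_prod_mul
    (fun r : ℝ => Set.indicator (Set.Ioo (0:ℝ) 1) (fun r => ((r:ℂ))^(a+b+1)) r)
    (fun θ : ℝ => Complex.exp ((((a:ℤ) - b : ℤ):ℂ) * θ * Complex.I))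
    (Set.Ioi (0:ℝ)) (Set.Ioo (-Real.pi) Real.pi)]
  have hrad : ∫ r in Set.Ioi (0:ℝ), Set.indicator (Set.Ioo (0:ℝ) 1) (fun r => ((r:ℂ))^(a+b+1)) r
      = 1/((a:ℂ)+(b:ℂ)+2) := by
    rw [MeasureTheory.setIntegral_indicator measurableSet_Ioo,
      show Set.Ioi (0:ℝ) ∩ Set.Ioo 0 1 = Set.Ioo 0 1 by
        rw [Set.inter_eq_self_of_subset_right Set.Ioo_subset_Ioi_self],
      rad]
    push_cast; ring_nf
  rw [hrad, ang]
  by_cases hab : a = b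
  · subst hab
    simp only [sub_self, if_pos rfl, if_pos rfl, ↓reduceIte, Complex.ofReal_mul, Complex.ofReal_ofNat]
    have ha1 : ((a:ℂ)+1) ≠ 0 := Nat.cast_add_one_ne_zero a
    have ha2 : ((a:ℂ)+(a:ℂ)+2) ≠ 0 := by intro hc; apply ha1; linear_combination hc/2
    rw [div_mul_eq_mul_div, one_mul, div_eq_div_iff ha2 ha1]
    ring
  · simp only [sub_eq_zero]
    rw [if_neg (by exact_mod_cast hab), if_neg hab]
    simp

lemma crossint (C1 E1 C2 E2 : ℂ) (a1 b1 a2 b2 D : ℕ) :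
    (∫ z in ball (0:ℂ) 1, (C1 * z^a1 * (starRingEnd ℂ z)^b1 - E1 * z^D)
        * (starRingEnd ℂ) (C2 * z^a2 * (starRingEnd ℂ z)^b2 - E2 * z^D))
    = C1 * (starRingEnd ℂ) C2 * (if a1+b2 = b1+a2 then (Real.pi:ℂ)/(((a1+b2 : ℕ):ℂ)+1) else 0)
      - C1 * (starRingEnd ℂ) E2 * (if a1 = b1+D then (Real.pi:ℂ)/(((a1 : ℕ):ℂ)+1) else 0)
      - E1 * (starRingEnd ℂ) C2 * (if D+b2 = a2 then (Real.pi:ℂ)/(((D+b2 : ℕ):ℂ)+1) else 0)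
      + E1 * (starRingEnd ℂ) E2 * ((Real.pi:ℂ)/((D:ℂ)+1)) := by
  have hmint : ∀ a b : ℕ,
      IntegrableOn (fun z : ℂ => z^a * (starRingEnd ℂ z)^b) (ball (0:ℂ) 1) volume := by
    intro a b
    have hc : Continuous fun z : ℂ => z^a * (starRingEnd ℂ z)^b :=
      (continuous_pow a).mul (Complex.continuous_conj.pow b)
    exact (hc.continuousOn.integrableOn_compact (isCompact_closedBall _ _)).mono_set
      ball_subset_closedBall
  have hexp : ∀ z : ℂ, (C1 * z^a1 * (starRingEnd ℂ z)^b1 - E1 * z^D)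
      * (starRingEnd ℂ) (C2 * z^a2 * (starRingEnd ℂ z)^b2 - E2 * z^D)
      = C1 * (starRingEnd ℂ) C2 * (z^(a1+b2) * (starRingEnd ℂ z)^(b1+a2))
        - C1 * (starRingEnd ℂ) E2 * (z^a1 * (starRingEnd ℂ z)^(b1+D))
        - E1 * (starRingEnd ℂ) C2 * (z^(D+b2) * (starRingEnd ℂ z)^a2)
        + E1 * (starRingEnd ℂ) E2 * (z^D * (starRingEnd ℂ z)^D) := by
    intro z
    simp only [map_sub, map_mul, map_pow, Complex.conj_conj, pow_add]
    ring
  rw [MeasureTheory.setIntegral_congr_fun measurableSet_ball (fun z _ => hexp z)]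
  have i1 : IntegrableOn (fun z : ℂ => C1 * (starRingEnd ℂ) C2 * (z^(a1+b2) * (starRingEnd ℂ z)^(b1+a2))) (ball (0:ℂ) 1) volume := (hmint _ _).const_mul _
  have i2 : IntegrableOn (fun z : ℂ => C1 * (starRingEnd ℂ) E2 * (z^a1 * (starRingEnd ℂ z)^(b1+D))) (ball (0:ℂ) 1) volume := (hmint _ _).const_mul _
  have i3 : IntegrableOn (fun z : ℂ => E1 * (starRingEnd ℂ) C2 * (z^(D+b2) * (starRingEnd ℂ z)^a2)) (ball (0:ℂ) 1) volume := (hmint _ _).const_mul _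
  have i4 : IntegrableOn (fun z : ℂ => E1 * (starRingEnd ℂ) E2 * (z^D * (starRingEnd ℂ z)^D)) (ball (0:ℂ) 1) volume := (hmint _ _).const_mul _
  have i12 : IntegrableOn (fun z : ℂ => C1 * (starRingEnd ℂ) C2 * (z^(a1+b2) * (starRingEnd ℂ z)^(b1+a2)) - C1 * (starRingEnd ℂ) E2 * (z^a1 * (starRingEnd ℂ z)^(b1+D))) (ball (0:ℂ) 1) volume := i1.sub i2
  have i123 : IntegrableOn (fun z : ℂ => C1 * (starRingEnd ℂ) C2 * (z^(a1+b2) * (starRingEnd ℂ z)^(b1+a2)) - C1 * (starRingEnd ℂ) E2 * (z^a1 * (starRingEnd ℂ z)^(b1+D)) - E1 * (starRingEnd ℂ) C2 * (z^(D+b2) * (starRingEnd ℂ z)^a2)) (ball (0:ℂ) 1) volume := i12.sub i3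
  rw [MeasureTheory.integral_add i123 i4, MeasureTheory.integral_sub i12 i3,
    MeasureTheory.integral_sub i1 i2,
    MeasureTheory.integral_const_mul, MeasureTheory.integral_const_mul,
    MeasureTheory.integral_const_mul, MeasureTheory.integral_const_mul,
    monint, monint, monint, monint, if_pos rfl]

noncomputable def Faux (d : ℤ) (b : ℕ → ℂ) (n : ℕ) (z : ℂ) : ℂ :=
  if -d ≤ (n : ℤ) then
    (((n : ℂ) + d) / (n + 1)) * b n * z ^ ((n : ℤ) + d - 1).toNat
        * (starRingEnd ℂ z) ^ (n + 1)
      - ((1 - d : ℂ) / (n + 1)) * starRingEnd ℂ (b n) * z ^ (-d).toNat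
  else 0

lemma pairint (d : ℤ) (hd : d < 1) (b : ℕ → ℂ) (n l : ℕ) :
    (∫ z in ball (0:ℂ) 1, Faux d b n z * (starRingEnd ℂ) (Faux d b l z))
    = if (-d ≤ (n:ℤ) ∧ -d ≤ (l:ℤ)) then
        ((((n:ℂ)+d)/((n:ℂ)+1)) * b n)
            * (starRingEnd ℂ) ((((l:ℂ)+d)/((l:ℂ)+1)) * b l)
            * ((Real.pi:ℂ)/((n:ℂ)+(l:ℂ)+(d:ℂ)+1))
        + (((1-(d:ℂ))/((n:ℂ)+1)) * (starRingEnd ℂ) (b n))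
            * (starRingEnd ℂ) (((1-(d:ℂ))/((l:ℂ)+1)) * (starRingEnd ℂ) (b l))
            * ((Real.pi:ℂ)/(1-(d:ℂ)))
      else 0 := by
  by_cases hn : -d ≤ (n:ℤ)
  · by_cases hl : -d ≤ (l:ℤ)
    · rw [if_pos ⟨hn, hl⟩]
      simp only [Faux, if_pos hn, if_pos hl]
      rw [show (fun z : ℂ => ((((n:ℂ) + d) / ((n:ℂ) + 1)) * b n * z ^ ((n : ℤ) + d - 1).toNat
          * (starRingEnd ℂ z) ^ (n + 1)
          - ((1 - (d:ℂ)) / ((n:ℂ) + 1)) * starRingEnd ℂ (b n) * z ^ (-d).toNat)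
          * (starRingEnd ℂ) ((((l:ℂ) + d) / ((l:ℂ) + 1)) * b l * z ^ ((l : ℤ) + d - 1).toNat
          * (starRingEnd ℂ z) ^ (l + 1)
          - ((1 - (d:ℂ)) / ((l:ℂ) + 1)) * starRingEnd ℂ (b l) * z ^ (-d).toNat))
        = fun z : ℂ => (((((n:ℂ) + d) / ((n:ℂ) + 1)) * b n) * z ^ ((n : ℤ) + d - 1).toNat
          * (starRingEnd ℂ z) ^ (n + 1)
          - (((1 - (d:ℂ)) / ((n:ℂ) + 1)) * starRingEnd ℂ (b n)) * z ^ (-d).toNat)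
          * (starRingEnd ℂ) (((((l:ℂ) + d) / ((l:ℂ) + 1)) * b l) * z ^ ((l : ℤ) + d - 1).toNat
          * (starRingEnd ℂ z) ^ (l + 1)
          - (((1 - (d:ℂ)) / ((l:ℂ) + 1)) * starRingEnd ℂ (b l)) * z ^ (-d).toNat) from rfl]
      rw [crossint]
      rw [if_neg (by omega : ¬(((n:ℤ)+d-1).toNat = (n + 1) + (-d).toNat))]
      rw [if_neg (by omega : ¬((-d).toNat + (l+1) = ((l:ℤ)+d-1).toNat))]
      have hD : (((-d).toNat : ℕ) : ℂ) = -(d:ℂ) := by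
        have h0 : (((-d).toNat : ℤ)) = -d := Int.toNat_of_nonneg (by omega)
        exact_mod_cast congrArg (fun x : ℤ => (x:ℂ)) h0
      have ht1 : ((((n:ℂ)+d)/((n:ℂ)+1)) * b n)
            * (starRingEnd ℂ) ((((l:ℂ)+d)/((l:ℂ)+1)) * b l)
            * (if ((n:ℤ)+d-1).toNat + (l+1) = (n+1) + ((l:ℤ)+d-1).toNat
                then (Real.pi:ℂ)/(((((n:ℤ)+d-1).toNat + (l+1) : ℕ):ℂ)+1) else 0)
          = ((((n:ℂ)+d)/((n:ℂ)+1)) * b n)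
            * (starRingEnd ℂ) ((((l:ℂ)+d)/((l:ℂ)+1)) * b l)
            * ((Real.pi:ℂ)/((n:ℂ)+(l:ℂ)+(d:ℂ)+1)) := by
        by_cases hnd : (n:ℤ) + d = 0
        · have hnc : (n:ℂ) + (d:ℂ) = 0 := by exact_mod_cast congrArg (fun x : ℤ => (x:ℂ)) hnd
          rw [hnc]
          simp
        · by_cases hld : (l:ℤ) + d = 0
          · have hlc : (l:ℂ) + (d:ℂ) = 0 := by
              exact_mod_cast congrArg (fun x : ℤ => (x:ℂ)) hld
            rw [hlc]
            simp
          · rw [if_pos (by omega)]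
            have han : ((((n:ℤ)+d-1).toNat : ℕ) : ℂ) = (n:ℂ) + (d:ℂ) - 1 := by
              have h0 : ((((n:ℤ)+d-1).toNat : ℤ)) = (n:ℤ)+d-1 :=
                Int.toNat_of_nonneg (by omega)
              exact_mod_cast congrArg (fun x : ℤ => (x:ℂ)) h0
            rw [show (((((n:ℤ)+d-1).toNat + (l+1) : ℕ):ℂ)) = ((((n:ℤ)+d-1).toNat : ℕ) : ℂ)
                + (l:ℂ) + 1 by push_cast; ring, han]
            ring_nf
      rw [ht1, hD]
      ring_nf
    · rw [if_neg (fun hc => hl hc.2)]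
      simp [Faux, if_neg hl]
  · rw [if_neg (fun hc => hn hc.1)]
    simp [Faux, if_neg hn]

lemma sum_rearrange (R : Finset ℕ) (X Y G : ℕ → ℕ → ℂ)
    (hfin : ∀ n ∈ R, ∀ l ∈ R, X n l + Y l n = G n l) :
    ∑ n ∈ R, ∑ l ∈ R, (X n l + Y n l) = ∑ n ∈ R, ∑ l ∈ R, G n l := by
  rw [show ∑ n ∈ R, ∑ l ∈ R, (X n l + Y n l)
      = (∑ n ∈ R, ∑ l ∈ R, X n l) + ∑ n ∈ R, ∑ l ∈ R, Y n l by
    simp [Finset.sum_add_distrib]]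
  rw [show (∑ n ∈ R, ∑ l ∈ R, Y n l) = ∑ n ∈ R, ∑ l ∈ R, Y l n from Finset.sum_comm]
  rw [← Finset.sum_add_distrib]
  refine Finset.sum_congr rfl fun n hn => ?_
  rw [← Finset.sum_add_distrib]
  exact Finset.sum_congr rfl fun l hl => hfin n hn l hl

theorem stmt_18 (d : ℤ) (hd : d < 1) (b : ℕ → ℂ) (hb : (Function.support b).Finite)
    (h : ℂ → ℂ)
    (hh : ∀ z : ℂ, h z = ∑' n : ℕ,
      if -d ≤ (n : ℤ) then
        (((n : ℂ) + d) / (n + 1)) * b n * z ^ ((n : ℤ) + d - 1).toNat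
            * (starRingEnd ℂ z) ^ (n + 1)
          - ((1 - d : ℂ) / (n + 1)) * starRingEnd ℂ (b n) * z ^ (-d).toNat
      else 0) :
    ((Real.pi : ℂ))⁻¹ * (∫ z in ball (0 : ℂ) 1, ((‖h z‖ : ℝ) : ℂ) ^ 2)
      = ∑' n : ℕ, ∑' l : ℕ,
          if -d ≤ (n : ℤ) ∧ -d ≤ (l : ℤ) then
            b n * starRingEnd ℂ (b l) / (((n : ℤ) + l + d + 1 : ℤ) : ℂ)
          else 0 := by
  obtain ⟨M, hM⟩ : ∃ M : ℕ, ∀ n, M ≤ n → b n = 0 := by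
    obtain ⟨N, hN⟩ := hb.bddAbove
    refine ⟨N + 1, fun n hn => ?_⟩
    by_contra hbn
    exact absurd (hN (Function.mem_support.mpr hbn)) (by omega)
  have hπ : ((Real.pi : ℝ) : ℂ) ≠ 0 := Complex.ofReal_ne_zero.mpr Real.pi_ne_zero
  have hh' : ∀ z, h z = ∑' n, Faux d b n z := hh
  have hzero : ∀ n : ℕ, b n = 0 → ∀ z, Faux d b n z = 0 := by
    intro n hbn z; simp [Faux, hbn]
  have hsum : ∀ z, h z = ∑ n ∈ Finset.range M, Faux d b n z := by
    intro z
    rw [hh' z]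
    exact tsum_eq_sum fun n hn =>
      hzero n (hM n (le_of_not_gt fun hlt => hn (Finset.mem_range.mpr hlt))) z
  have hcont : ∀ n : ℕ, Continuous (Faux d b n) := by
    intro n
    unfold Faux
    by_cases hc : -d ≤ (n : ℤ)
    · simp only [if_pos hc]
      exact ((continuous_const.mul (continuous_pow _)).mul
        (Complex.continuous_conj.pow _)).sub (continuous_const.mul (continuous_pow _))
    · simp only [if_neg hc]; exact continuous_const
  have hint : ∀ n l : ℕ, IntegrableOn
      (fun z => Faux d b n z * (starRingEnd ℂ) (Faux d b l z)) (ball (0:ℂ) 1) volume := by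
    intro n l
    have hc : Continuous fun z => Faux d b n z * (starRingEnd ℂ) (Faux d b l z) :=
      (hcont n).mul (Complex.continuous_conj.comp (hcont l))
    exact (hc.continuousOn.integrableOn_compact (isCompact_closedBall _ _)).mono_set
      ball_subset_closedBall
  have hI : (∫ z in ball (0 : ℂ) 1, ((‖h z‖ : ℝ) : ℂ) ^ 2)
      = ∑ n ∈ Finset.range M, ∑ l ∈ Finset.range M,
          ∫ z in ball (0:ℂ) 1, Faux d b n z * (starRingEnd ℂ) (Faux d b l z) := by
    rw [MeasureTheory.setIntegral_congr_fun (g := fun z => ∑ n ∈ Finset.range M,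
        ∑ l ∈ Finset.range M, Faux d b n z * (starRingEnd ℂ) (Faux d b l z))
        measurableSet_ball ?_]
    · rw [MeasureTheory.integral_finset_sum _
        (fun n _ => integrable_finset_sum _ (fun l _ => hint n l))]
      exact Finset.sum_congr rfl fun n _ =>
        MeasureTheory.integral_finset_sum _ (fun l _ => hint n l)
    · intro z _
      dsimp only
      rw [← Complex.ofReal_pow, Complex.sq_norm, ← Complex.mul_conj]
      rw [hsum z, map_sum, Finset.sum_mul_sum]
  have hRin : ∀ n : ℕ, (∑' l : ℕ,
      if -d ≤ (n : ℤ) ∧ -d ≤ (l : ℤ) then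
        b n * starRingEnd ℂ (b l) / (((n : ℤ) + l + d + 1 : ℤ) : ℂ) else 0)
      = ∑ l ∈ Finset.range M,
      (if -d ≤ (n : ℤ) ∧ -d ≤ (l : ℤ) then
        b n * starRingEnd ℂ (b l) / (((n : ℤ) + l + d + 1 : ℤ) : ℂ) else 0) := by
    intro n
    exact tsum_eq_sum fun l hl => by
      rw [hM l (le_of_not_gt fun hlt => hl (Finset.mem_range.mpr hlt))]; simp
  have hR : (∑' n : ℕ, ∑' l : ℕ,
      if -d ≤ (n : ℤ) ∧ -d ≤ (l : ℤ) then
        b n * starRingEnd ℂ (b l) / (((n : ℤ) + l + d + 1 : ℤ) : ℂ) else 0)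
      = ∑ n ∈ Finset.range M, ∑ l ∈ Finset.range M,
      (if -d ≤ (n : ℤ) ∧ -d ≤ (l : ℤ) then
        b n * starRingEnd ℂ (b l) / (((n : ℤ) + l + d + 1 : ℤ) : ℂ) else 0) := by
    rw [tsum_congr hRin]
    exact tsum_eq_sum fun n hn => Finset.sum_eq_zero fun l _ => by
      rw [hM n (le_of_not_gt fun hlt => hn (Finset.mem_range.mpr hlt))]; simp
  rw [hI, hR]
  simp only [Finset.mul_sum]
  have key : ∀ n l : ℕ, (((Real.pi : ℝ):ℂ))⁻¹ *
      (∫ z in ball (0:ℂ) 1, Faux d b n z * (starRingEnd ℂ) (Faux d b l z))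
      = (if (-d ≤ (n:ℤ) ∧ -d ≤ (l:ℤ)) then
          ((((n:ℂ)+d)/((n:ℂ)+1)) * b n) * (starRingEnd ℂ) ((((l:ℂ)+d)/((l:ℂ)+1)) * b l)
            / ((n:ℂ)+(l:ℂ)+(d:ℂ)+1) else 0)
        + (if (-d ≤ (n:ℤ) ∧ -d ≤ (l:ℤ)) then
          (((1-(d:ℂ))/((n:ℂ)+1)) * (starRingEnd ℂ) (b n))
            * (starRingEnd ℂ) (((1-(d:ℂ))/((l:ℂ)+1)) * (starRingEnd ℂ) (b l))
            / (1-(d:ℂ)) else 0) := by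
    intro n l
    rw [pairint d hd b n l]
    split_ifs with hq
    · have e : ∀ A s : ℂ, (A * (((Real.pi : ℝ):ℂ)/s)) = ((Real.pi : ℝ):ℂ) * (A/s) := by
        intro A s
        rw [mul_comm, div_mul_eq_mul_div, mul_div_assoc]
      rw [e, e, ← mul_add, ← mul_assoc, inv_mul_cancel₀ hπ, one_mul]
    · simp
  rw [show (∑ n ∈ Finset.range M, ∑ l ∈ Finset.range M, (((Real.pi : ℝ):ℂ))⁻¹ *
      (∫ z in ball (0:ℂ) 1, Faux d b n z * (starRingEnd ℂ) (Faux d b l z)))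
      = ∑ n ∈ Finset.range M, ∑ l ∈ Finset.range M,
        ((if (-d ≤ (n:ℤ) ∧ -d ≤ (l:ℤ)) then
          ((((n:ℂ)+d)/((n:ℂ)+1)) * b n) * (starRingEnd ℂ) ((((l:ℂ)+d)/((l:ℂ)+1)) * b l)
            / ((n:ℂ)+(l:ℂ)+(d:ℂ)+1) else 0)
        + (if (-d ≤ (n:ℤ) ∧ -d ≤ (l:ℤ)) then
          (((1-(d:ℂ))/((n:ℂ)+1)) * (starRingEnd ℂ) (b n))
            * (starRingEnd ℂ) (((1-(d:ℂ))/((l:ℂ)+1)) * (starRingEnd ℂ) (b l))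
            / (1-(d:ℂ)) else 0)) from
    Finset.sum_congr rfl fun n _ => Finset.sum_congr rfl fun l _ => key n l]
  refine sum_rearrange _ _ _ _ ?_
  intro n _ l _
  by_cases hq : -d ≤ (n:ℤ) ∧ -d ≤ (l:ℤ)
  · rw [if_pos hq, if_pos ⟨hq.2, hq.1⟩, if_pos hq]
    have h1 : ((n:ℂ)+1) ≠ 0 := Nat.cast_add_one_ne_zero n
    have h2 : ((l:ℂ)+1) ≠ 0 := Nat.cast_add_one_ne_zero l
    have h3 : ((n:ℂ)+(l:ℂ)+(d:ℂ)+1) ≠ 0 := by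
      have h0 : (((n:ℤ)+(l:ℤ)+d+1 : ℤ) : ℂ) ≠ 0 :=
        Int.cast_ne_zero.mpr (by omega)
      push_cast at h0
      exact h0
    have h4 : (1-(d:ℂ)) ≠ 0 := by
      have h0 : (((1-d : ℤ)) : ℂ) ≠ 0 := Int.cast_ne_zero.mpr (by omega)
      push_cast at h0
      exact h0
    simp only [map_mul, map_div₀, map_add, map_sub, map_one, Complex.conj_conj,
      map_natCast, map_intCast]
    push_cast
    field_simp
    ring
  · rw [if_neg hq, if_neg (fun hc => hq ⟨hc.2, hc.1⟩), if_neg hq]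
    simp
end
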